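/- arXiv:math/0402012 — 8 statements merged into one kernel-verified Lean document; each statement's English description precedes it below -/
import Mathlib

section
/- Let (n,t) be a chart. Then every orbit of t on {-n,...,-1,1,...,n} has an even number of elements. -/
/-- Model of `X_n = {-n,...,-1,1,...,n}`: an element `±k` is encoded as
`(k mod n, sign)` with `true` meaning `+`.  Negation flips the sign. -/
abbrev Xn (n : ℕ) := ZMod n × Bool

/-- The negation map `k ↦ -k` on `X_n`. -/
def negX {n : ℕ} (p : Xn n) : Xn n := (p.1, !p.2)

/-- `(n, t)` is a chart: for every `k ∈ X_n` some integer power of `t` sends `k` to `-k`. -/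
def IsChart {n : ℕ} (t : Equiv.Perm (Xn n)) : Prop :=
  ∀ k : Xn n, ∃ s : ℤ, (t ^ s) k = negX k

lemma negX_involutive {n : ℕ} : Function.Involutive (negX (n := n)) := by
  intro p; simp [negX]

/-- every orbit of a chart has an even number of elements. -/
theorem stmt2 (n : ℕ) (hn : 1 ≤ n) (t : Equiv.Perm (Xn n)) (ht : IsChart t) :
    ∀ a : Xn n, Even (Set.ncard {x : Xn n | ∃ s : ℤ, (t ^ s) a = x}) := by
  haveI : NeZero n := ⟨by omega⟩
  intro a
  set S : Set (Xn n) := {x : Xn n | ∃ s : ℤ, (t ^ s) a = x} with hS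
  have hneg : ∀ x ∈ S, negX x ∈ S := by
    rintro x ⟨s, rfl⟩
    obtain ⟨s', hs'⟩ := ht ((t ^ s) a)
    exact ⟨s' + s, by rw [zpow_add]; simpa using hs'⟩
  set St : Set (Xn n) := S ∩ {x | x.2 = true} with hSt
  set Sf : Set (Xn n) := S ∩ {x | x.2 = false} with hSf
  have hunion : S = St ∪ Sf := by
    ext x
    rcases Bool.eq_false_or_eq_true x.2 with h | h <;>
      simp [hSt, hSf, h]
  have himg : Sf = negX '' St := by
    ext y
    constructor
    · rintro ⟨hyS, hy2⟩
      refine ⟨negX y, ⟨hneg y hyS, ?_⟩, negX_involutive y⟩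
      simp [negX, Set.mem_setOf_eq] at hy2 ⊢
      simp [hy2]
    · rintro ⟨x, ⟨hxS, hx2⟩, rfl⟩
      refine ⟨hneg x hxS, ?_⟩
      simp [Set.mem_setOf_eq] at hx2
      simp [negX, hx2]
  have hdisj : Disjoint St Sf := by
    rw [Set.disjoint_left]
    rintro x ⟨_, hx2⟩ ⟨_, hx2'⟩
    simp [Set.mem_setOf_eq] at hx2 hx2'
    rw [hx2] at hx2'; exact Bool.noConfusion hx2'
  have hfin : ∀ A : Set (Xn n), A.Finite := fun A => A.toFinite
  rw [hunion, Set.ncard_union_eq hdisj (hfin St) (hfin Sf), himg,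
    Set.ncard_image_of_injective _ negX_involutive.injective]
  exact ⟨St.ncard, rfl⟩
end

section
/- Let n ≥ 1 and let t be a straight chart, i.e., a chart with t(-k) = -t(k) for all k. Define v : {1,...,n} → {1,...,n} by v(k), = |t(k)|, and S = {k ∈ {1,...,n} : t(k) < 0}. Then v is a bijection and S meets each orbit of v in an odd number of elements. -/
/-- for a straight chart `t`, the map `v(k) = |t(k)|` on `{1,...,n}` is a
bijection and `S = {k : t(k) < 0}` meets each `v`-orbit in an odd number of elements. -/
theorem stmt5 (n : ℕ) (hn : 1 ≤ n) (t : Equiv.Perm (Xn n)) (ht : IsChart t)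
    (hstraight : ∀ p : Xn n, t (negX p) = negX (t p)) :
    Function.Bijective (fun k : ZMod n => (t (k, true)).1) ∧
      ∀ a : ZMod n,
        Odd (Set.ncard {x : ZMod n |
          (∃ s : ℕ, (fun k : ZMod n => (t (k, true)).1)^[s] a = x) ∧
            (t (x, true)).2 = false}) := by
  haveI : NeZero n := ⟨by omega⟩
  set v : ZMod n → ZMod n := fun k => (t (k, true)).1 with hv
  set σ : ZMod n → Bool := fun k => (t (k, true)).2 with hσ
  -- key formula
  have hst : ∀ (k : ZMod n) (b : Bool), t (k, b) = (v k, b == σ k) := by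
    intro k b
    cases b
    · have h := hstraight (k, true)
      simp only [negX, Bool.not_true] at h
      rw [h]
      simp only [hv, hσ]
      cases hb : (t (k, true)).2 <;> simp [hb]
    · simp [hv, hσ]
  -- injectivity of v
  have hvinj : Function.Injective v := by
    intro k k' h
    by_cases hσ' : σ k = σ k'
    · have : t (k, true) = t (k', true) := by
        rw [hst, hst, h, hσ']
      exact (Prod.mk.injEq _ _ _ _).mp (t.injective this) |>.1
    · exfalso
      have heq : t (k, true) = t (k', false) := by
        rw [hst, hst, h]
        cases h1 : σ k <;> cases h2 : σ k' <;>
          first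
          | exact absurd (h1.trans h2.symm) hσ'
          | rfl
      have := t.injective heq
      simp at this
  have hvbij : Function.Bijective v := Finite.injective_iff_bijective.mp hvinj
  refine ⟨hvbij, ?_⟩
  intro a
  -- the counting function
  set N : ℕ → ℕ := fun m => ((Finset.range m).filter (fun i => σ (v^[i] a) = false)).card with hN
  -- iterate formula
  have hiter : ∀ m : ℕ, (t ^ m) (a, true) = (v^[m] a, decide (Even (N m))) := by
    intro m
    induction m with
    | zero => simp [hN]
    | succ m ih =>
      rw [pow_succ', Equiv.Perm.mul_apply, ih, hst]
      have hNs : N (m + 1) = N m + (if σ (v^[m] a) = false then 1 else 0) := by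
        simp only [hN, Finset.range_add_one, Finset.filter_insert]
        split <;> simp [Finset.card_insert_of_notMem, Finset.mem_filter]
      rw [Function.iterate_succ_apply']
      congr 1
      cases hb : σ (v^[m] a) <;> simp [hb, hNs, Nat.even_add_one] <;>
        by_cases he : Even (N m) <;> simp [he, ← Nat.not_even_iff_odd]
  -- chart gives a natural power
  obtain ⟨s, hs⟩ := ht (a, true)
  have hto : orderOf t > 0 := orderOf_pos t
  set s' : ℕ := (s % (orderOf t : ℤ)).toNat with hs'
  have hts' : (t ^ s') (a, true) = (a, false) := by
    have h1 : (t ^ (s' : ℤ)) = t ^ s := by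
      rw [hs', Int.toNat_of_nonneg (Int.emod_nonneg s (by exact_mod_cast hto.ne'))]
      exact zpow_mod_orderOf t s
    have := congrArg (fun u => u (a, true)) h1
    simp only [zpow_natCast] at this
    rw [this, hs]
    simp [negX]
  -- conclusions from iterate formula
  rw [hiter s'] at hts'
  have hper : v^[s'] a = a := congrArg Prod.fst hts'
  have hodd' : Odd (N s') := by
    have := congrArg Prod.snd hts'
    simp only at this
    rw [← Nat.not_even_iff_odd]
    intro he
    simp [he] at this
  -- minimal period
  have hs'pos : 0 < s' := by
    rcases Nat.eq_zero_or_pos s' with h | h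
    · exfalso; rw [h] at hts'; simp [hN] at hts'
    · exact h
  have hperpt : Function.IsPeriodicPt v s' a := hper
  set m := Function.minimalPeriod v a with hm
  have hmpos : 0 < m := Function.IsPeriodicPt.minimalPeriod_pos hs'pos hperpt
  obtain ⟨q, hq⟩ := Function.IsPeriodicPt.minimalPeriod_dvd hperpt
  have hvm : v^[m] a = a := Function.iterate_minimalPeriod
  -- N is additive over periods: N (c + m) = N c + N m when v^[c] a = a
  have hNadd : ∀ c : ℕ, v^[c] a = a → N (c + m) = N c + N m := by
    intro c hc
    simp only [hN, Finset.card_filter]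
    rw [Finset.sum_range_add]
    congr 1
    refine Finset.sum_congr rfl fun i _ => ?_
    have hci : v^[c + i] a = v^[i] a := by
      rw [add_comm, Function.iterate_add_apply, hc]
    rw [hci]
  have hNmul : ∀ q : ℕ, N (q * m) = q * N m := by
    intro q
    induction q with
    | zero => simp [hN]
    | succ q ih =>
      have hc : v^[q * m] a = a := by
        rw [mul_comm, Function.iterate_mul]
        exact Function.iterate_fixed hvm q
      rw [Nat.succ_mul, hNadd (q * m) hc, ih, Nat.succ_mul]
  have hoddNm : Odd (N m) := by
    rw [hq, Nat.mul_comm, hNmul] at hodd'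
    exact (Nat.odd_mul.mp hodd').2
  -- identify the set
  have hset : {x : ZMod n | (∃ s : ℕ, v^[s] a = x) ∧ σ x = false}
      = ↑(((Finset.range m).filter (fun i => σ (v^[i] a) = false)).image (fun i => v^[i] a)) := by
    ext x
    simp only [Set.mem_setOf_eq, Finset.coe_image, Set.mem_image, Finset.mem_coe,
      Finset.mem_filter, Finset.mem_range]
    constructor
    · rintro ⟨⟨s, rfl⟩, hσx⟩
      refine ⟨s % m, ⟨Nat.mod_lt s hmpos, ?_⟩, ?_⟩ <;>
        rw [Function.iterate_mod_minimalPeriod_eq] <;> exact hσx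
    · rintro ⟨i, ⟨hi, hσi⟩, rfl⟩
      exact ⟨⟨i, rfl⟩, hσi⟩
  rw [hset, Set.ncard_coe_finset, Finset.card_image_of_injOn]
  · exact hoddNm
  · intro i hi j hj hij
    simp only [Finset.coe_filter, Set.mem_setOf_eq, Finset.mem_range] at hi hj
    exact Function.iterate_injOn_Iio_minimalPeriod hi.1 hj.1 hij
end

section
/- Let n ≥ 1, let v be a bijection of {1,...,n}, and let S ⊆ {1,...,n} meet each orbit of v in an odd number of elements. Define t on X_n = {-n,...,-1,1,...,n} by t(k) = v(k) for k ∈ {1,...,n} \ S, t(k) = -v(k) for k ∈ S, and t(k) = -t(-k) for k < 0. Then (n,t) is a straight chart (t is a bijection, t(-k) = -t(k), and for every k there is s with t^s(k) = -k). -/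
/-- The map `t` built from a bijection `v` of `{1,...,n}` and `S ⊆ {1,...,n}`:
`t(k) = v(k)` for positive `k ∉ S`, `t(k) = -v(k)` for positive `k ∈ S`,
and `t(-k) = -t(k)` (equivalently `t(k) = -t(-k)` for `k < 0`). -/
def tOf {n : ℕ} (v : Equiv.Perm (ZMod n)) (S : Finset (ZMod n)) (p : Xn n) : Xn n :=
  (v p.1, if p.1 ∈ S then !p.2 else p.2)

private lemma tOf_iterate {n : ℕ} (v : Equiv.Perm (ZMod n)) (S : Finset (ZMod n))
    (a : ZMod n) (b : Bool) (s : ℕ) :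
    (tOf v S)^[s] (a, b) =
      ((v ^ s) a,
        xor (decide (Odd (((Finset.range s).filter (fun i => (v ^ i) a ∈ S)).card))) b) := by
  induction s with
  | zero => simp
  | succ s ih =>
      rw [Function.iterate_succ_apply', ih]
      have hpow : v ((v ^ s) a) = (v ^ (s + 1)) a := by
        rw [pow_succ', Equiv.Perm.mul_apply]
      by_cases h : (v ^ s) a ∈ S
      · have hcard : ((Finset.range (s + 1)).filter (fun i => (v ^ i) a ∈ S)).card
            = ((Finset.range s).filter (fun i => (v ^ i) a ∈ S)).card + 1 := by
          rw [Finset.range_add_one, Finset.filter_insert, if_pos h,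
            Finset.card_insert_of_notMem (by simp)]
        simp only [tOf, if_pos h, hpow, hcard]
        refine Prod.ext rfl ?_
        have : Odd (((Finset.range s).filter (fun i => (v ^ i) a ∈ S)).card + 1)
            ↔ ¬ Odd (((Finset.range s).filter (fun i => (v ^ i) a ∈ S)).card) := by
          rw [Nat.odd_add_one, Nat.not_odd_iff_even]
        rw [show (decide (Odd (((Finset.range s).filter (fun i => (v ^ i) a ∈ S)).card + 1)))
            = !(decide (Odd (((Finset.range s).filter (fun i => (v ^ i) a ∈ S)).card))) by
          rw [← decide_not]; exact decide_eq_decide.mpr this]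
        cases decide (Odd (((Finset.range s).filter (fun i => (v ^ i) a ∈ S)).card)) <;>
          cases b <;> rfl
      · have hcard : ((Finset.range (s + 1)).filter (fun i => (v ^ i) a ∈ S)).card
            = ((Finset.range s).filter (fun i => (v ^ i) a ∈ S)).card := by
          rw [Finset.range_add_one, Finset.filter_insert, if_neg h]
        simp only [tOf, if_neg h, hpow, hcard]

/-- if `v` is a bijection of `{1,...,n}` and `S` meets every `v`-orbit in an
odd number of elements, then the induced `t` is a straight chart: it is a bijection,
`t(-k) = -t(k)`, and a power of `t` carries every `k` to `-k`. -/
theorem stmt6 (n : ℕ) (hn : 1 ≤ n) (v : Equiv.Perm (ZMod n)) (S : Finset (ZMod n))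
    (hodd : ∀ a : ZMod n, Odd (Set.ncard {x : ZMod n | x ∈ S ∧ ∃ s : ℕ, (v ^ s) a = x})) :
    Function.Bijective (tOf v S) ∧
      (∀ p : Xn n, tOf v S (negX p) = negX (tOf v S p)) ∧
      (∀ p : Xn n, ∃ s : ℕ, (tOf v S)^[s] p = negX p) := by
  haveI : NeZero n := ⟨by omega⟩
  refine ⟨?_, ?_, ?_⟩
  · -- bijective
    rw [← Finite.injective_iff_bijective]
    rintro ⟨a, b⟩ ⟨a', b'⟩ h
    simp only [tOf, Prod.mk.injEq] at h
    obtain ⟨h1, h2⟩ := h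
    have ha : a = a' := v.injective h1
    subst ha
    by_cases hs : a ∈ S <;> simp_all
  · intro p
    obtain ⟨a, b⟩ := p
    simp only [tOf, negX]
    by_cases h : a ∈ S <;> simp [h]
  · intro p
    obtain ⟨a, b⟩ := p
    -- minimal period of a under v
    have hper : a ∈ Function.periodicPts ⇑v := by
      refine ⟨orderOf v, ?_, ?_⟩
      · exact orderOf_pos v
      · show (⇑v)^[orderOf v] a = a
        rw [← Equiv.Perm.coe_pow, pow_orderOf_eq_one]; rfl
    set c := Function.minimalPeriod ⇑v a with hc
    have hcpos : 0 < c := Function.minimalPeriod_pos_of_mem_periodicPts hper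
    have hiter : ∀ i : ℕ, (v ^ i) a = (⇑v)^[i] a := by
      intro i; rw [Equiv.Perm.coe_pow]
    -- the orbit set equals the image finset
    have hset : {x : ZMod n | x ∈ S ∧ ∃ s : ℕ, (v ^ s) a = x} =
        ↑(((Finset.range c).filter (fun i => (v ^ i) a ∈ S)).image (fun i => (v ^ i) a)) := by
      ext x
      simp only [Finset.coe_image, Set.mem_image, Finset.mem_coe, Finset.mem_filter,
        Finset.mem_range, Set.mem_setOf_eq]
      constructor
      · rintro ⟨hxS, s, rfl⟩
        have hmod : (v ^ (s % c)) a = (v ^ s) a := by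
          rw [hiter, hiter, hc]
          exact Function.iterate_mod_minimalPeriod_eq
        exact ⟨s % c, ⟨Nat.mod_lt _ hcpos, hmod ▸ hxS⟩, hmod⟩
      · rintro ⟨i, ⟨_, hiS⟩, rfl⟩
        exact ⟨hiS, i, rfl⟩
    have hinj : Set.InjOn (fun i => (v ^ i) a)
        ↑((Finset.range c).filter (fun i => (v ^ i) a ∈ S)) := by
      intro i hi j hj hij
      simp only [Finset.coe_filter, Set.mem_setOf_eq, Finset.mem_range] at hi hj
      have := Function.iterate_injOn_Iio_minimalPeriod (f := ⇑v) (x := a)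
        (Set.mem_Iio.mpr hi.1) (Set.mem_Iio.mpr hj.1)
      exact this (by simpa only [hiter] using hij)
    have hcard : ((Finset.range c).filter (fun i => (v ^ i) a ∈ S)).card =
        Set.ncard {x : ZMod n | x ∈ S ∧ ∃ s : ℕ, (v ^ s) a = x} := by
      rw [hset, Set.ncard_coe_finset, Finset.card_image_of_injOn hinj]
    refine ⟨c, ?_⟩
    rw [tOf_iterate, hcard]
    have : decide (Odd (Set.ncard {x : ZMod n | x ∈ S ∧ ∃ s : ℕ, (v ^ s) a = x})) = true :=
      decide_eq_true (hodd a)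
    rw [this]
    have hva : (v ^ c) a = a := by
      rw [hiter, hc, Function.iterate_minimalPeriod]
    simp [negX, hva]
end

section
/- Let K = (k_1, k_2, ...) be a finite sequence of non-negative integers, not all zero, and set n = Σ_m m·k_m. The number of charts (n,t) such that t has exactly k_m orbits of cardinality 2m for every m ≥ 1 equals n! · ∏_{m≥1} (1/k_m!) · ((2m-1)!/m!)^{k_m}. -/
open Equiv Equiv.Perm Finset

section ConjHom
variable {α β : Type*} (ε : α ≃ β)

/-- Conjugation by an equiv, as a monoid hom between permutation groups. -/
def conjHom : Perm α →* Perm β where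
  toFun f := (ε.symm.trans f).trans ε
  map_one' := by ext x; simp
  map_mul' f g := by ext x; simp

@[simp] lemma conjHom_apply (f : Perm α) (x : α) : conjHom ε f (ε x) = ε (f x) := by
  simp [conjHom]

lemma conjHom_apply' (f : Perm α) (y : β) : conjHom ε f y = ε (f (ε.symm y)) := rfl

lemma conjHom_sameCycle (f : Perm α) (x y : α) :
    (conjHom ε f).SameCycle (ε x) (ε y) ↔ f.SameCycle x y := by
  constructor
  · rintro ⟨s, hs⟩
    refine ⟨s, ?_⟩
    rw [← map_zpow, conjHom_apply] at hs
    exact ε.injective hs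
  · rintro ⟨s, hs⟩
    exact ⟨s, by rw [← map_zpow, conjHom_apply, hs]⟩

lemma conjHom_symm_conjHom (f : Perm α) : conjHom ε.symm (conjHom ε f) = f := by
  ext x; simp [conjHom]

end ConjHom

section SigmaPerm
variable {ι : Type*} {β : ι → Type*}

lemma mySigma_cast_eq (x : (i : ι) × β i) (i : ι) (h : x.1 = i) :
    (⟨i, cast (congrArg β h) x.2⟩ : (i : ι) × β i) = x := by
  subst h; rfl

lemma sigmaCongrRightHom_apply' (F : ∀ i, Perm (β i)) (p : ι) (x : β p) :
    Equiv.Perm.sigmaCongrRightHom β F ⟨p, x⟩ = ⟨p, F p x⟩ := rfl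

lemma sigmaCongrRightHom_sameCycle_fst (F : ∀ i, Perm (β i)) {a b : (i : ι) × β i}
    (h : (Equiv.Perm.sigmaCongrRightHom β F).SameCycle a b) : a.1 = b.1 := by
  obtain ⟨s, hs⟩ := h
  rw [← map_zpow] at hs
  have : ((Equiv.Perm.sigmaCongrRightHom β (F ^ s)) a).1 = a.1 := by
    obtain ⟨i, z⟩ := a; rfl
  rw [hs] at this
  exact this.symm

lemma sigmaCongrRightHom_sameCycle (F : ∀ i, Perm (β i)) (p : ι) (x y : β p) :
    (Equiv.Perm.sigmaCongrRightHom β F).SameCycle ⟨p, x⟩ ⟨p, y⟩ ↔ (F p).SameCycle x y := by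
  constructor
  · rintro ⟨s, hs⟩
    rw [← map_zpow] at hs
    refine ⟨s, ?_⟩
    have := sigma_mk_injective hs
    simpa using this
  · rintro ⟨s, hs⟩
    refine ⟨s, ?_⟩
    rw [← map_zpow, sigmaCongrRightHom_apply']
    simp [hs]

/-- Extract a family of fiber permutations from a fiber-preserving permutation of a sigma type. -/
lemma exists_sigmaCongrRightHom_eq (σ : Perm ((i : ι) × β i)) (hσ : ∀ x, (σ x).1 = x.1) :
    ∃ F : ∀ i, Perm (β i), Equiv.Perm.sigmaCongrRightHom β F = σ := by
  have hσ' : ∀ x, (σ.symm x).1 = x.1 := by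
    intro x
    conv_rhs => rw [← σ.apply_symm_apply x]
    exact (hσ (σ.symm x)).symm
  have key : ∀ (i : ι) (z : β i),
      (⟨i, cast (congrArg β (hσ ⟨i, z⟩)) (σ ⟨i, z⟩).2⟩ : (i : ι) × β i) = σ ⟨i, z⟩ :=
    fun i z => mySigma_cast_eq _ _ (hσ ⟨i, z⟩)
  have key' : ∀ (i : ι) (z : β i),
      (⟨i, cast (congrArg β (hσ' ⟨i, z⟩)) (σ.symm ⟨i, z⟩).2⟩ : (i : ι) × β i) = σ.symm ⟨i, z⟩ :=
    fun i z => mySigma_cast_eq _ _ (hσ' ⟨i, z⟩)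
  refine ⟨fun i => ⟨fun z => cast (congrArg β (hσ ⟨i, z⟩)) (σ ⟨i, z⟩).2,
    fun z => cast (congrArg β (hσ' ⟨i, z⟩)) (σ.symm ⟨i, z⟩).2, ?_, ?_⟩, ?_⟩
  · intro z
    apply sigma_mk_injective (i := i)
    rw [key', key, σ.symm_apply_apply]
  · intro z
    apply sigma_mk_injective (i := i)
    rw [key, key', σ.apply_symm_apply]
  · ext1 x
    obtain ⟨i, z⟩ := x
    rw [sigmaCongrRightHom_apply']
    exact key i z

end SigmaPerm

/-- The type of full cycles on `Fin q`. -/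
abbrev Cyc (q : ℕ) := {c : Perm (Fin q) // c.IsCycle ∧ c.support = Finset.univ}

section FullCycle
variable {γ : Type*} [Fintype γ] [DecidableEq γ]

lemma fullCycle_sameCycle {f : Perm γ} (hf : f.IsCycle ∧ f.support = Finset.univ)
    (x y : γ) : f.SameCycle x y := by
  obtain ⟨⟨a, hax, ha⟩, hsupp⟩ := hf
  have hmove : ∀ z : γ, f z ≠ z := by
    intro z
    have : z ∈ f.support := hsupp ▸ Finset.mem_univ z
    exact Equiv.Perm.mem_support.mp this
  exact ((ha (hmove x)).symm).trans (ha (hmove y))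

lemma fullCycle_of_sameCycle {f : Perm γ} (hcard : 1 < Fintype.card γ)
    (h : ∀ x y : γ, f.SameCycle x y) : f.IsCycle ∧ f.support = Finset.univ := by
  have hmove : ∀ z : γ, f z ≠ z := by
    intro z hz
    obtain ⟨w, hw⟩ := Fintype.exists_ne_of_one_lt_card hcard z
    obtain ⟨s, hs⟩ := h z w
    have h2 : (f ^ s) z = z := Function.IsFixedPt.perm_zpow hz s
    exact hw (h2.symm.trans hs).symm
  obtain ⟨x⟩ : Nonempty γ := Fintype.card_pos_iff.mp (by omega)
  refine ⟨⟨x, hmove x, fun y _ => h x y⟩, ?_⟩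
  ext z
  simp [Equiv.Perm.mem_support, hmove z]

end FullCycle

/-- Permutations fixing `0` number `s!`. -/
lemma card_fixzero (s : ℕ) :
    Nat.card {ℓ : Perm (Fin (s + 1)) // ℓ 0 = 0} = Nat.factorial s := by
  have e1 : {ℓ : Perm (Fin (s + 1)) // ℓ 0 = 0} ≃
      {x : Fin (s + 1) × Perm (Fin s) // x.1 = 0} := by
    refine Equiv.Perm.decomposeFin.subtypeEquiv fun ℓ => ?_
    have := Equiv.Perm.decomposeFin_symm_apply_zero
      (Equiv.Perm.decomposeFin ℓ).1 (Equiv.Perm.decomposeFin ℓ).2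
    rw [Prod.mk.eta, Equiv.symm_apply_apply] at this
    constructor
    · intro h; rw [← this, h]
    · intro h; rw [this, h]
  have e2 : {x : Fin (s + 1) × Perm (Fin s) // x.1 = 0} ≃ Perm (Fin s) :=
    { toFun := fun x => x.1.2
      invFun := fun e => ⟨(0, e), rfl⟩
      left_inv := by rintro ⟨⟨p, e⟩, h⟩; simp only at h; simp [h]
      right_inv := fun e => rfl }
  rw [Nat.card_congr (e1.trans e2), Nat.card_eq_fintype_card, Fintype.card_perm,
    Fintype.card_fin]

lemma pow_finRotate_zero {q : ℕ} (hq : 2 ≤ q) (j : ℕ) (hj : j < q) :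
    haveI : NeZero q := ⟨by omega⟩
    (finRotate q ^ j) (0 : Fin q) = ⟨j, hj⟩ := by
  haveI : NeZero q := ⟨by omega⟩
  induction j with
  | zero => simp [Fin.ext_iff]
  | succ j ih =>
    rw [pow_succ', Equiv.Perm.mul_apply, ih (by omega)]
    obtain ⟨r, rfl⟩ : ∃ r, q = r + 1 := ⟨q - 1, by omega⟩
    rw [finRotate_of_lt (by omega)]

lemma card_cyc {q : ℕ} (hq : 2 ≤ q) : Nat.card (Cyc q) = Nat.factorial (q - 1) := by
  haveI : NeZero q := ⟨by omega⟩
  have horder : ∀ c : Cyc q, orderOf c.1 = q := by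
    intro c
    rw [Equiv.Perm.IsCycle.orderOf c.2.1, c.2.2, Finset.card_univ, Fintype.card_fin]
  have hcycOn : ∀ c : Cyc q, c.1.IsCycleOn (Finset.univ : Finset (Fin q)) := by
    intro c
    have h1 := c.2.1.isCycleOn
    have hset : {x | c.1 x ≠ x} = ((Finset.univ : Finset (Fin q)) : Set (Fin q)) := by
      ext x; simp [← Equiv.Perm.mem_support, c.2.2]
    rwa [hset] at h1
  have key : ∀ (c : Cyc q) (i j : Fin q), (i : ℕ) ≤ (j : ℕ) →
      (c.1 ^ (i : ℕ)) 0 = (c.1 ^ (j : ℕ)) 0 → i = j := by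
    intro c i j hle hij
    have h2 : (c.1 ^ ((j : ℕ) - (i : ℕ))) ((c.1 ^ (i : ℕ)) 0) = (c.1 ^ (i : ℕ)) 0 := by
      rw [← Equiv.Perm.mul_apply, ← pow_add, Nat.sub_add_cancel hle, hij]
    have hdvd := ((hcycOn c).pow_apply_eq (Finset.mem_univ _)).mp h2
    rw [Finset.card_univ, Fintype.card_fin] at hdvd
    rcases Nat.eq_zero_or_pos ((j : ℕ) - (i : ℕ)) with h0 | h0
    · exact Fin.ext (by omega)
    · have := Nat.le_of_dvd h0 hdvd
      have hjq : (j : ℕ) < q := Fin.is_lt j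
      omega
  have hinj : ∀ c : Cyc q, Function.Injective (fun i : Fin q => (c.1 ^ (i : ℕ)) 0) := by
    intro c i j hij
    simp only at hij
    rcases le_total (i : ℕ) (j : ℕ) with hle | hle
    · exact key c i j hle hij
    · exact (key c j i hle hij.symm).symm
  obtain ⟨s, rfl⟩ : ∃ s, q = s + 1 := ⟨q - 1, by omega⟩
  rw [show (s + 1) - 1 = s from rfl, ← card_fixzero s]
  apply Nat.card_congr
  refine
    { toFun := fun c => ⟨Equiv.ofBijective _ (Finite.injective_iff_bijective.mp (hinj c)), by
        simp [Equiv.ofBijective]⟩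
      invFun := fun ℓ => ⟨conjHom ℓ.1 (finRotate (s + 1)), ?_, ?_⟩
      left_inv := ?_
      right_inv := ?_ }
  · have : conjHom ℓ.1 (finRotate (s + 1)) = ℓ.1 * finRotate (s + 1) * ℓ.1⁻¹ := by
      ext x; simp [conjHom, Equiv.Perm.mul_apply, Equiv.Perm.inv_def]
    rw [this]
    exact Equiv.Perm.IsCycle.conj (isCycle_finRotate_of_le hq)
  · have : conjHom ℓ.1 (finRotate (s + 1)) = ℓ.1 * finRotate (s + 1) * ℓ.1⁻¹ := by
      ext x; simp [conjHom, Equiv.Perm.mul_apply, Equiv.Perm.inv_def]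
    rw [this, Equiv.Perm.support_conj, support_finRotate_of_le hq]
    exact Finset.map_univ_equiv _
  · intro c
    apply Subtype.ext
    refine Equiv.ext fun x => ?_
    set ℓ : Perm (Fin (s + 1)) :=
      Equiv.ofBijective _ (Finite.injective_iff_bijective.mp (hinj c)) with hℓ
    have hℓapp : ∀ i : Fin (s + 1), ℓ i = (c.1 ^ (i : ℕ)) 0 := fun i => rfl
    have hx : x = ℓ (ℓ.symm x) := (ℓ.apply_symm_apply x).symm
    rw [conjHom_apply' ]
    show ℓ (finRotate (s + 1) (ℓ.symm x)) = c.1 x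
    conv_rhs => rw [hx]
    set i := ℓ.symm x
    rcases Nat.lt_or_ge (i : ℕ) s with hlt | hge
    · have : finRotate (s + 1) i = ⟨(i : ℕ) + 1, by omega⟩ := by
        rw [← finRotate_of_lt hlt]
      rw [this, hℓapp, hℓapp, pow_succ', Equiv.Perm.mul_apply]
    · have his : (i : ℕ) = s := by have := Fin.is_lt i; omega
      have hi : i = ⟨s, by omega⟩ := Fin.ext his
      rw [hi, finRotate_last', hℓapp, hℓapp]
      show (c.1 ^ ((0 : Fin (s+1)) : ℕ)) 0 = c.1 ((c.1 ^ s) 0)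
      rw [← Equiv.Perm.mul_apply, ← pow_succ']
      have : c.1 ^ (s + 1) = 1 := by
        have h := pow_orderOf_eq_one c.1; rwa [horder c] at h
      simp [this]
  · intro ℓ
    apply Subtype.ext
    refine Equiv.ext fun i => ?_
    show ((conjHom ℓ.1 (finRotate (s + 1))) ^ (i : ℕ)) 0 = ℓ.1 i
    rw [← map_pow, conjHom_apply']
    have h0 : ℓ.1.symm 0 = 0 := by
      rw [Equiv.symm_apply_eq]; exact ℓ.2.symm
    rw [h0, pow_finRotate_zero hq (i : ℕ) (Fin.is_lt i)]

section Comb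
variable (N : ℕ) (k : ℕ → ℕ)

/-- Index of blocks: for each `m ≤ N`, there are `k m` blocks. -/
abbrev BIdx := (m : Fin (N + 1)) × Fin (k m)

/-- Index of pairs: each block `⟨m, j⟩` contains `m` pairs. -/
abbrev PIdx := (p : BIdx N k) × Fin (p.1 : ℕ)

variable {N k}

lemma bidx_ext {p q : BIdx N k} (h1 : p.1 = q.1) (h2 : (p.2 : ℕ) = (q.2 : ℕ)) : p = q := by
  obtain ⟨pm, pj⟩ := p
  obtain ⟨qm, qj⟩ := q
  simp only at h1
  subst h1
  exact congrArg _ (Fin.ext h2)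

lemma pidx_ext {p q : PIdx N k} (h1 : p.1 = q.1) (h2 : (p.2 : ℕ) = (q.2 : ℕ)) : p = q := by
  obtain ⟨pm, pj⟩ := p
  obtain ⟨qm, qj⟩ := q
  simp only at h1
  subst h1
  exact congrArg _ (Fin.ext h2)

lemma bidx_pos (hk0 : k 0 = 0) (p : BIdx N k) : 1 ≤ (p.1 : ℕ) := by
  rcases Nat.eq_zero_or_pos (p.1 : ℕ) with h0 | h0
  · have hlt : (p.2 : ℕ) < k (p.1 : ℕ) := p.2.isLt
    have hkk : k (p.1 : ℕ) = k 0 := congrArg k h0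
    have h1 : 0 < k (p.1 : ℕ) := lt_of_le_of_lt (Nat.zero_le _) hlt
    have h2 : k (p.1 : ℕ) = 0 := hkk.trans hk0
    omega
  · omega

lemma bidx_snd {m : Fin (N + 1)} {x y : Fin (k m)} (h : (⟨m, x⟩ : BIdx N k) = ⟨m, y⟩) :
    x = y := eq_of_heq (Sigma.mk.inj_iff.mp h).2

lemma pidx_snd {p : BIdx N k} {x y : Fin (p.1 : ℕ)} (h : (⟨p, x⟩ : PIdx N k) = ⟨p, y⟩) :
    x = y := eq_of_heq (Sigma.mk.inj_iff.mp h).2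

/-- The fiber of the pair index over a block index. -/
def fiberEquiv (p : BIdx N k) : {a : PIdx N k // a.1 = p} ≃ Fin (p.1 : ℕ) where
  toFun a := Fin.cast (congrArg (fun q : BIdx N k => (q.1 : ℕ)) a.2) a.1.2
  invFun i := ⟨⟨p, i⟩, rfl⟩
  left_inv := by rintro ⟨⟨q, i⟩, rfl⟩; rfl
  right_inv i := rfl

lemma bidx_mk_eq_iff (f : ∀ mm : Fin (N + 1), Perm (Fin (k mm))) {m m' : Fin (N + 1)}
    {x : Fin (k m)} {y : Fin (k m')} :
    (⟨m, f m x⟩ : BIdx N k) = ⟨m', f m' y⟩ ↔ (⟨m, x⟩ : BIdx N k) = ⟨m', y⟩ := by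
  constructor
  · intro hmk
    obtain ⟨h1, h2⟩ := Sigma.mk.inj_iff.mp hmk
    subst h1
    rw [heq_iff_eq] at h2
    exact congrArg _ ((f m).injective h2)
  · intro hmk
    obtain ⟨h1, h2⟩ := Sigma.mk.inj_iff.mp hmk
    subst h1
    rw [heq_iff_eq] at h2
    subst h2
    rfl

/-- Block-respecting permutations of the pair index correspond to reorderings of same-size
blocks together with reorderings within each block. -/
noncomputable def autEquiv (hk0 : k 0 = 0) :
    {h : Perm (PIdx N k) // ∀ a b : PIdx N k, (h a).1 = (h b).1 ↔ a.1 = b.1} ≃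
      ((m : Fin (N + 1)) → Perm (Fin (k m)) × (Fin (k m) → Perm (Fin (m : ℕ)))) := by
  -- m-preservation for elements of the automorphism set
  have hmfst : ∀ (h : Perm (PIdx N k))
      (hh : ∀ a b : PIdx N k, (h a).1 = (h b).1 ↔ a.1 = b.1) (a : PIdx N k),
      (h a).1.1 = a.1.1 := by
    intro h hh a
    have E : {b : PIdx N k // b.1 = a.1} ≃ {b : PIdx N k // b.1 = (h a).1} :=
      { toFun := fun b => ⟨h b.1, by rw [hh b.1 a]; exact b.2⟩
        invFun := fun b => ⟨h.symm b.1, by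
          have := hh (h.symm b.1) a
          rw [h.apply_symm_apply] at this
          rw [← this]; exact b.2⟩
        left_inv := fun b => Subtype.ext (by simp)
        right_inv := fun b => Subtype.ext (by simp) }
    have hc : ((h a).1.1 : ℕ) = (a.1.1 : ℕ) := by
      have h1 := Nat.card_congr ((fiberEquiv a.1).symm.trans (E.trans (fiberEquiv (h a).1)))
      simpa using h1.symm
    exact Fin.ext hc
  refine
    { toFun := fun hs => fun m =>
        (Equiv.ofBijective (fun j => Fin.cast
            (congrArg (fun mm : Fin (N+1) => k mm)
              (hmfst hs.1 hs.2 ⟨⟨m, j⟩, ⟨0, bidx_pos hk0 ⟨m, j⟩⟩⟩))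
            ((hs.1 ⟨⟨m, j⟩, ⟨0, bidx_pos hk0 ⟨m, j⟩⟩⟩).1.2))
          (Finite.injective_iff_bijective.mp ?_),
         fun j => Equiv.ofBijective (fun i => Fin.cast
            (congrArg (fun mm : Fin (N+1) => (mm : ℕ)) (hmfst hs.1 hs.2 ⟨⟨m, j⟩, i⟩))
            ((hs.1 ⟨⟨m, j⟩, i⟩).2))
          (Finite.injective_iff_bijective.mp ?_))
      invFun := fun πρ =>
        ⟨{ toFun := fun a => ⟨⟨a.1.1, (πρ a.1.1).1 a.1.2⟩, (πρ a.1.1).2 a.1.2 a.2⟩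
           invFun := fun a => ⟨⟨a.1.1, ((πρ a.1.1).1)⁻¹ a.1.2⟩,
              ((πρ a.1.1).2 (((πρ a.1.1).1)⁻¹ a.1.2))⁻¹ a.2⟩
           left_inv := ?_
           right_inv := ?_ }, ?_⟩
      left_inv := ?_
      right_inv := ?_ }
  · -- injectivity of the block permutation
    intro j j' hjj
    have hv : ((hs.1 ⟨⟨m, j⟩, ⟨0, bidx_pos hk0 ⟨m, j⟩⟩⟩).1.2 : ℕ) =
        ((hs.1 ⟨⟨m, j'⟩, ⟨0, bidx_pos hk0 ⟨m, j'⟩⟩⟩).1.2 : ℕ) := congrArg Fin.val hjj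
    have h1 : (hs.1 ⟨⟨m, j⟩, ⟨0, bidx_pos hk0 ⟨m, j⟩⟩⟩).1 =
        (hs.1 ⟨⟨m, j'⟩, ⟨0, bidx_pos hk0 ⟨m, j'⟩⟩⟩).1 := by
      apply bidx_ext _ hv
      rw [hmfst hs.1 hs.2, hmfst hs.1 hs.2]
    have h2 := (hs.2 _ _).mp h1
    simp only at h2
    exact bidx_snd h2
  · -- injectivity of the within-block permutation
    intro i i' hii
    have hv : ((hs.1 ⟨⟨m, j⟩, i⟩).2 : ℕ) = ((hs.1 ⟨⟨m, j⟩, i'⟩).2 : ℕ) := congrArg Fin.val hii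
    have h1 : (hs.1 ⟨⟨m, j⟩, i⟩).1 = (hs.1 ⟨⟨m, j⟩, i'⟩).1 := (hs.2 _ _).mpr rfl
    have h2 : hs.1 ⟨⟨m, j⟩, i⟩ = hs.1 ⟨⟨m, j⟩, i'⟩ := by
      apply pidx_ext h1 hv
    exact pidx_snd (hs.1.injective h2)
  · -- left_inv of the constructed permutation
    rintro ⟨⟨m, j⟩, i⟩
    simp only
    have hj : ((πρ m).1)⁻¹ ((πρ m).1 j) = j := by simp
    rw [hj]
    simp
  · -- right_inv of the constructed permutation
    rintro ⟨⟨m, j⟩, i⟩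
    simp only
    have hj : (πρ m).1 (((πρ m).1)⁻¹ j) = j := by simp
    rw [hj]
    simp
  · -- constructed permutation is block-respecting
    intro a b
    obtain ⟨⟨m, j⟩, i⟩ := a
    obtain ⟨⟨m', j'⟩, i'⟩ := b
    simp only
    exact bidx_mk_eq_iff fun mm => (πρ mm).1
  · -- left inverse of the whole equivalence
    rintro ⟨h, hh⟩
    apply Subtype.ext
    refine Equiv.ext fun a => ?_
    obtain ⟨⟨m, j⟩, i⟩ := a
    simp only [Equiv.coe_fn_mk, Equiv.ofBijective_apply]
    apply pidx_ext
    · apply bidx_ext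
      · show m = (h ⟨⟨m, j⟩, i⟩).1.1
        exact (hmfst h hh ⟨⟨m, j⟩, i⟩).symm
      · show ((h ⟨⟨m, j⟩, ⟨0, bidx_pos hk0 ⟨m, j⟩⟩⟩).1.2 : ℕ) = ((h ⟨⟨m, j⟩, i⟩).1.2 : ℕ)
        have : (h ⟨⟨m, j⟩, ⟨0, bidx_pos hk0 ⟨m, j⟩⟩⟩).1 = (h ⟨⟨m, j⟩, i⟩).1 :=
          (hh _ _).mpr rfl
        rw [this]
    · show ((h ⟨⟨m, j⟩, i⟩).2 : ℕ) = _
      rfl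
  · -- right inverse of the whole equivalence
    intro πρ
    funext m
    refine Prod.ext (Equiv.ext fun j => Fin.ext ?_) (funext fun j => Equiv.ext fun i => Fin.ext ?_)
    · rfl
    · rfl

end Comb

section Main
variable {N : ℕ} {k : ℕ → ℕ} {n : ℕ}

/-- The disjoint union of the blocks, each block containing `2m` elements. -/
abbrev Dom (N : ℕ) (k : ℕ → ℕ) := (p : BIdx N k) × (Fin (p.1 : ℕ) × Bool)

def domEquiv : Dom N k ≃ PIdx N k × Bool where
  toFun d := (⟨d.1, d.2.1⟩, d.2.2)
  invFun x := ⟨x.1.1, (x.1.2, x.2)⟩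
  left_inv := by rintro ⟨p, i, b⟩; rfl
  right_inv := by rintro ⟨⟨p, i⟩, b⟩; rfl

/-- Identification of the abstract domain with `X_n`, twisted by `g`. -/
def eta (e : PIdx N k ≃ ZMod n) (g : Perm (ZMod n)) : Dom N k ≃ Xn n :=
  domEquiv.trans (Equiv.prodCongr (e.trans g) (Equiv.refl Bool))

lemma eta_apply (e : PIdx N k ≃ ZMod n) (g : Perm (ZMod n)) (p : BIdx N k)
    (i : Fin (p.1 : ℕ)) (b : Bool) : eta e g ⟨p, (i, b)⟩ = (g (e ⟨p, i⟩), b) := rfl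

/-- `Fin m × Bool ≃ Fin (2m)`. -/
def bE (m : ℕ) : Fin m × Bool ≃ Fin (2 * m) :=
  ((Equiv.refl (Fin m)).prodCongr finTwoEquiv.symm).trans
    (finProdFinEquiv.trans (finCongr (Nat.mul_comm m 2)))

/-- A family of full cycles, one for each block. -/
abbrev CFam (N : ℕ) (k : ℕ → ℕ) := (p : BIdx N k) → Cyc (2 * (p.1 : ℕ))

/-- The blockwise permutation of the abstract domain. -/
def sigmaPart (c : CFam N k) : Perm (Dom N k) :=
  Equiv.Perm.sigmaCongrRightHom _ (fun p => conjHom (bE (p.1 : ℕ)).symm (c p).1)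

/-- The chart determined by a relabeling `g` and a family of cycles `c`. -/
def Phi (e : PIdx N k ≃ ZMod n) (g : Perm (ZMod n)) (c : CFam N k) : Perm (Xn n) :=
  conjHom (eta e g) (sigmaPart c)

lemma sameCycle_phi (e : PIdx N k ≃ ZMod n) (g : Perm (ZMod n)) (c : CFam N k)
    (d d' : Dom N k) :
    (Phi e g c).SameCycle (eta e g d) (eta e g d') ↔ d.1 = d'.1 := by
  rw [Phi, conjHom_sameCycle]
  constructor
  · exact fun h => sigmaCongrRightHom_sameCycle_fst _ h
  · intro h
    obtain ⟨p, v⟩ := d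
    obtain ⟨p', v'⟩ := d'
    simp only at h
    subst h
    rw [sigmaPart, sigmaCongrRightHom_sameCycle]
    have h1 : v = (bE (p.1 : ℕ)).symm ((bE (p.1 : ℕ)) v) := by simp
    have h2 : v' = (bE (p.1 : ℕ)).symm ((bE (p.1 : ℕ)) v') := by simp
    rw [h1, h2, conjHom_sameCycle]
    exact fullCycle_sameCycle (c p).2 _ _

lemma isChart_phi (e : PIdx N k ≃ ZMod n) (g : Perm (ZMod n)) (c : CFam N k) :
    IsChart (Phi e g c) := by
  intro x
  obtain ⟨d, rfl⟩ : ∃ d : Dom N k, x = eta e g d := ⟨(eta e g).symm x, by simp⟩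
  obtain ⟨p, i, b⟩ := d
  have hneg : negX (eta e g ⟨p, (i, b)⟩) = eta e g ⟨p, (i, !b)⟩ := rfl
  rw [hneg]
  exact (sameCycle_phi e g c ⟨p, (i, b)⟩ ⟨p, (i, !b)⟩).mpr rfl

end Main

section Main2
variable {N : ℕ} {k : ℕ → ℕ} {n : ℕ}

/-- The set of orbits of cardinality `2m`. -/
def orbSet (t : Perm (Xn n)) (m : ℕ) : Set (Set (Xn n)) :=
  {O | (∃ a, O = {x | t.SameCycle a x}) ∧ O.ncard = 2 * m}

lemma orbSet_def (t : Perm (Xn n)) (m : ℕ) :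
    orbSet t m = {O : Set (Xn n) |
      (∃ a : Xn n, O = {x | ∃ s : ℤ, (t ^ s) a = x}) ∧ O.ncard = 2 * m} := rfl

variable (e : PIdx N k ≃ ZMod n) (g : Perm (ZMod n)) (c : CFam N k)

/-- The block of `X_n` indexed by `p`. -/
def Bset (p : BIdx N k) : Set (Xn n) := {x | ((eta e g).symm x).1 = p}

lemma mem_Bset_iff (p : BIdx N k) (d : Dom N k) : eta e g d ∈ Bset e g p ↔ d.1 = p := by
  simp [Bset]

lemma orbit_phi_eq_Bset (p : BIdx N k) (v : Fin (p.1 : ℕ) × Bool) :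
    {x | (Phi e g c).SameCycle (eta e g ⟨p, v⟩) x} = Bset e g p := by
  ext x
  have hx : x = eta e g ((eta e g).symm x) := by simp
  constructor
  · intro h
    have h' : (Phi e g c).SameCycle (eta e g ⟨p, v⟩) (eta e g ((eta e g).symm x)) := by
      rw [← hx]; exact h
    have h2 := (sameCycle_phi e g c _ _).mp h'
    simpa [Bset] using h2.symm
  · intro h
    rw [Set.mem_setOf_eq, hx, sameCycle_phi]
    exact (by simpa [Bset] using h : ((eta e g).symm x).1 = p).symm

lemma Bset_eq_image (p : BIdx N k) :
    Bset e g p = (fun v : Fin (p.1 : ℕ) × Bool => eta e g ⟨p, v⟩) '' Set.univ := by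
  ext x
  constructor
  · intro h
    have hx : ((eta e g).symm x).1 = p := h
    refine ⟨cast (congrArg (fun q : BIdx N k => Fin (q.1 : ℕ) × Bool) hx)
      ((eta e g).symm x).2, Set.mem_univ _, ?_⟩
    have hcast := mySigma_cast_eq ((eta e g).symm x) p hx
    show eta e g ⟨p, cast (congrArg (fun q : BIdx N k => Fin (q.1 : ℕ) × Bool) hx)
      ((eta e g).symm x).2⟩ = x
    rw [hcast]
    simp
  · rintro ⟨v, -, rfl⟩
    exact (mem_Bset_iff e g p ⟨p, v⟩).mpr rfl

lemma eta_mk_injective (p : BIdx N k) :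
    Function.Injective (fun v : Fin (p.1 : ℕ) × Bool => eta e g ⟨p, v⟩) := by
  intro v v' hv
  have h2 := (eta e g).injective hv
  exact eq_of_heq (Sigma.mk.inj_iff.mp h2).2

lemma ncard_Bset (p : BIdx N k) : (Bset e g p).ncard = 2 * (p.1 : ℕ) := by
  rw [Bset_eq_image, Set.ncard_image_of_injective _ (eta_mk_injective e g p),
    Set.ncard_univ]
  simp [Nat.card_eq_fintype_card, mul_comm]

lemma Bset_injective (hk0 : k 0 = 0) : Function.Injective (Bset e g (n := n)) := by
  intro p p' hp
  have hv : eta e g ⟨p, (⟨0, bidx_pos hk0 p⟩, true)⟩ ∈ Bset e g p :=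
    (mem_Bset_iff e g p _).mpr rfl
  rw [hp] at hv
  rw [mem_Bset_iff] at hv
  exact hv

lemma orbSet_phi (hk0 : k 0 = 0) (m : ℕ) (hm : 1 ≤ m) :
    orbSet (Phi e g c) m = Bset e g '' {p : BIdx N k | (p.1 : ℕ) = m} := by
  ext O
  constructor
  · rintro ⟨⟨a, rfl⟩, hcard⟩
    obtain ⟨d, rfl⟩ : ∃ d : Dom N k, a = eta e g d := ⟨(eta e g).symm a, by simp⟩
    obtain ⟨p, v⟩ := d
    rw [orbit_phi_eq_Bset] at hcard ⊢
    refine ⟨p, ?_, rfl⟩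
    have := ncard_Bset e g p
    simp only [Set.mem_setOf_eq]
    omega
  · rintro ⟨p, hp, rfl⟩
    simp only [Set.mem_setOf_eq] at hp
    constructor
    · exact ⟨eta e g ⟨p, (⟨0, bidx_pos hk0 p⟩, true)⟩, (orbit_phi_eq_Bset e g c p _).symm⟩
    · rw [ncard_Bset, hp]

lemma ncard_bidx_fiber (hk : ∀ m, N < m → k m = 0) (m : ℕ) (hm : 1 ≤ m) :
    ({p : BIdx N k | (p.1 : ℕ) = m}).ncard = k m := by
  rcases le_or_gt m N with hle | hlt
  · rw [← Nat.card_coe_set_eq]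
    have E : {p : BIdx N k // (p.1 : ℕ) = m} ≃ Fin (k m) :=
      { toFun := fun q => Fin.cast (congrArg k q.2) q.1.2
        invFun := fun j => ⟨⟨⟨m, by omega⟩, j⟩, rfl⟩
        left_inv := by rintro ⟨⟨mm, j⟩, h⟩; simp only at h; subst h; rfl
        right_inv := fun j => rfl }
    show Nat.card {p : BIdx N k // (p.1 : ℕ) = m} = k m
    rw [Nat.card_congr E]
    simp
  · have hempty : {p : BIdx N k | (p.1 : ℕ) = m} = ∅ := by
      ext p
      simp only [Set.mem_setOf_eq, Set.mem_empty_iff_false, iff_false]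
      have := p.1.isLt
      omega
    rw [hempty, Set.ncard_empty, hk m hlt]

lemma counts_phi (hk0 : k 0 = 0) (hk : ∀ m, N < m → k m = 0) (m : ℕ) (hm : 1 ≤ m) :
    (orbSet (Phi e g c) m).ncard = k m := by
  rw [orbSet_phi e g c hk0 m hm,
    Set.ncard_image_of_injective _ (Bset_injective e g hk0),
    ncard_bidx_fiber hk m hm]

end Main2

section Main3
variable {N : ℕ} {k : ℕ → ℕ} {n : ℕ}

/-- The set of "positive" representatives of pairs in a set. -/
def Qset (O : Set (Xn n)) : Set (ZMod n) := {z | (z, true) ∈ O}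

lemma ncard_prod_univ_bool {α : Type*} (s : Set α) :
    (s ×ˢ (Set.univ : Set Bool)).ncard = 2 * s.ncard := by
  rw [← Nat.card_coe_set_eq, ← Nat.card_coe_set_eq,
    Nat.card_congr (Equiv.Set.prod s Set.univ), Nat.card_prod,
    Nat.card_congr (Equiv.Set.univ Bool)]
  simp [mul_comm]

variable {t : Perm (Xn n)}

lemma sc_neg (hch : IsChart t) (x : Xn n) : t.SameCycle x (negX x) := hch x

lemma sc_true (hch : IsChart t) (x : Xn n) : t.SameCycle x (x.1, true) := by
  obtain ⟨z, b⟩ := x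
  cases b
  · simpa [negX] using sc_neg hch (z, false)
  · exact Equiv.Perm.SameCycle.refl t _

lemma orb_eq_prod (hch : IsChart t) (a : Xn n) :
    {y | t.SameCycle a y} = Qset {y | t.SameCycle a y} ×ˢ (Set.univ : Set Bool) := by
  ext ⟨z, b⟩
  simp only [Set.mem_setOf_eq, Set.mem_prod, Set.mem_univ, and_true, Qset]
  constructor
  · exact fun h => h.trans (sc_true hch (z, b))
  · exact fun h => h.trans (sc_true hch (z, b)).symm

lemma ncard_orb (hch : IsChart t) (a : Xn n) :
    {y | t.SameCycle a y}.ncard = 2 * (Qset {y | t.SameCycle a y}).ncard := by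
  conv_lhs => rw [orb_eq_prod hch a]
  exact ncard_prod_univ_bool _

lemma exists_good_equiv (hk0 : k 0 = 0) (hk : ∀ m, N < m → k m = 0) [NeZero n]
    (hch : IsChart t) (hcnt : ∀ m, 1 ≤ m → (orbSet t m).ncard = k m) :
    ∃ e' : PIdx N k ≃ ZMod n, ∀ a b : PIdx N k,
      (t.SameCycle (e' a, true) (e' b, true) ↔ a.1 = b.1) := by
  classical
  have horb_eq : ∀ {a x : Xn n}, t.SameCycle a x →
      {y | t.SameCycle x y} = {y | t.SameCycle a y} := by
    intro a x hx
    ext y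
    exact ⟨fun hy => hx.trans hy, fun hy => hx.symm.trans hy⟩
  have hQpos : ∀ a : Xn n, 1 ≤ (Qset {y | t.SameCycle a y}).ncard := by
    intro a
    have hne : (a.1 : ZMod n) ∈ Qset {y | t.SameCycle a y} := sc_true hch a
    have hpos := (Set.ncard_pos (Set.toFinite (Qset {y | t.SameCycle a y}))).mpr ⟨a.1, hne⟩
    omega
  have horbsetmem : ∀ a : Xn n,
      {y | t.SameCycle a y} ∈ orbSet t ((Qset {y | t.SameCycle a y}).ncard) :=
    fun a => ⟨⟨a, rfl⟩, ncard_orb hch a⟩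
  have hQle : ∀ a : Xn n, (Qset {y | t.SameCycle a y}).ncard ≤ N := by
    intro a
    by_contra hlt
    have h0 : k ((Qset {y | t.SameCycle a y}).ncard) = 0 := hk _ (by omega)
    have h1 := hcnt _ (hQpos a)
    rw [h0] at h1
    rw [Set.ncard_eq_zero (Set.toFinite _)] at h1
    exact absurd (h1 ▸ horbsetmem a) (Set.notMem_empty _)
  -- enumeration of orbits of each size
  have hOE : ∀ m : ℕ, 1 ≤ m → Nonempty (Fin (k m) ≃ ↥(orbSet t m)) := by
    intro m hm
    haveI := (Set.toFinite (orbSet t m)).fintype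
    have hc : Fintype.card ↥(orbSet t m) = k m := by
      rw [← Nat.card_eq_fintype_card, Nat.card_coe_set_eq, hcnt m hm]
    exact ⟨(Fintype.equivFinOfCardEq hc).symm⟩
  have hQm : ∀ (m : ℕ) (O : ↥(orbSet t m)), (Qset O.1).ncard = m := by
    rintro m ⟨O, ⟨a, rfl⟩, hcard⟩
    have := ncard_orb hch a
    simp only
    omega
  have hQE : ∀ (m : ℕ) (O : ↥(orbSet t m)), Nonempty (Fin m ≃ ↥(Qset O.1)) := by
    intro m O
    haveI := (Set.toFinite (Qset O.1)).fintype
    have hc : Fintype.card ↥(Qset O.1) = m := by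
      rw [← Nat.card_eq_fintype_card, Nat.card_coe_set_eq, hQm m O]
    exact ⟨(Fintype.equivFinOfCardEq hc).symm⟩
  set OE : ∀ m : ℕ, 1 ≤ m → (Fin (k m) ≃ ↥(orbSet t m)) :=
    fun m hm => (hOE m hm).some with hOEdef
  set QE : ∀ (m : ℕ) (O : ↥(orbSet t m)), Fin m ≃ ↥(Qset O.1) :=
    fun m O => (hQE m O).some with hQEdef
  set f : PIdx N k → ZMod n := fun a =>
    ((QE (a.1.1 : ℕ) ((OE (a.1.1 : ℕ) (bidx_pos hk0 a.1)) a.1.2)) a.2 : ZMod n) with hfdef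
  have hfmem : ∀ a : PIdx N k,
      ((f a : ZMod n), true) ∈ ((OE (a.1.1 : ℕ) (bidx_pos hk0 a.1)) a.1.2).1 :=
    fun a => ((QE (a.1.1 : ℕ) ((OE (a.1.1 : ℕ) (bidx_pos hk0 a.1)) a.1.2)) a.2).2
  have horbO : ∀ (m : ℕ) (O : ↥(orbSet t m)) (x : Xn n), x ∈ O.1 →
      {y | t.SameCycle x y} = O.1 := by
    rintro m ⟨O, ⟨a, rfl⟩, hcard⟩ x hx
    exact horb_eq hx
  -- the key characterization
  have hiff : ∀ a b : PIdx N k, (t.SameCycle (f a, true) (f b, true) ↔ a.1 = b.1) := by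
    rintro ⟨⟨ma, ja⟩, ia⟩ ⟨⟨mb, jb⟩, ib⟩
    simp only
    constructor
    · intro hsc
      have h1 := horbO _ _ _ (hfmem ⟨⟨ma, ja⟩, ia⟩)
      have h2 := horbO _ _ _ (hfmem ⟨⟨mb, jb⟩, ib⟩)
      have h3 : (f ⟨⟨mb, jb⟩, ib⟩, true) ∈ ((OE (ma : ℕ) (bidx_pos hk0 ⟨ma, ja⟩)) ja).1 := by
        rw [← h1]; exact hsc
      have h4 : ((OE (mb : ℕ) (bidx_pos hk0 ⟨mb, jb⟩)) jb).1 =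
          ((OE (ma : ℕ) (bidx_pos hk0 ⟨ma, ja⟩)) ja).1 := by
        rw [← h2, ← horbO _ _ _ h3]
      -- equal sizes
      have hsa := ((OE (ma : ℕ) (bidx_pos hk0 ⟨ma, ja⟩)) ja).2.2
      have hsb := ((OE (mb : ℕ) (bidx_pos hk0 ⟨mb, jb⟩)) jb).2.2
      rw [h4] at hsb
      have hmm : ma = mb := Fin.ext (by omega)
      subst hmm
      have h5 : (OE (ma : ℕ) (bidx_pos hk0 ⟨ma, ja⟩)) ja =
          (OE (ma : ℕ) (bidx_pos hk0 ⟨ma, jb⟩)) jb := Subtype.ext h4.symm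
      have h6 : ja = jb := (OE (ma : ℕ) (bidx_pos hk0 ⟨ma, ja⟩)).injective h5
      rw [h6]
    · intro h
      obtain ⟨hmm, hjj⟩ := Sigma.mk.inj_iff.mp h
      subst hmm
      rw [heq_iff_eq] at hjj
      subst hjj
      have h1 := horbO _ _ _ (hfmem ⟨⟨ma, ja⟩, ia⟩)
      have h2 : (f ⟨⟨ma, ja⟩, ib⟩, true) ∈ ((OE (ma : ℕ) (bidx_pos hk0 ⟨ma, ja⟩)) ja).1 :=
        hfmem ⟨⟨ma, ja⟩, ib⟩
      rw [← h1] at h2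
      exact h2
  -- injectivity
  have hinj : Function.Injective f := by
    intro a b hab
    have h0 : t.SameCycle (f a, true) (f b, true) := by rw [hab]
    have h1 := (hiff a b).mp h0
    obtain ⟨⟨ma, ja⟩, ia⟩ := a
    obtain ⟨⟨mb, jb⟩, ib⟩ := b
    simp only at h1
    obtain ⟨hmm, hjj⟩ := Sigma.mk.inj_iff.mp h1
    subst hmm
    rw [heq_iff_eq] at hjj
    subst hjj
    have h2 : ia = ib := by
      apply ((QE (ma : ℕ) ((OE (ma : ℕ) (bidx_pos hk0 ⟨ma, ja⟩)) ja))).injective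
      exact Subtype.ext hab
    rw [h2]
  -- surjectivity
  have hsurj : Function.Surjective f := by
    intro z
    have hz : z ∈ Qset {y | t.SameCycle ((z, true) : Xn n) y} :=
      Equiv.Perm.SameCycle.refl t _
    set m : ℕ := (Qset {y | t.SameCycle ((z, true) : Xn n) y}).ncard with hmdef
    have hm1 : 1 ≤ m := hQpos (z, true)
    have hmN : m ≤ N := hQle (z, true)
    have hO : {y | t.SameCycle ((z, true) : Xn n) y} ∈ orbSet t m := horbsetmem (z, true)
    set mF : Fin (N + 1) := ⟨m, by omega⟩ with hmFdef
    set j : Fin (k m) := (OE m hm1).symm ⟨_, hO⟩ with hjdef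
    set i : Fin m := (QE m ⟨_, hO⟩).symm ⟨z, hz⟩ with hidef
    refine ⟨⟨⟨mF, j⟩, i⟩, ?_⟩
    show ((QE m ((OE m (bidx_pos hk0 ⟨mF, j⟩)) j)) i : ZMod n) = z
    have h5 : (OE m (bidx_pos hk0 ⟨mF, j⟩)) j = ⟨_, hO⟩ := (OE m hm1).apply_symm_apply _
    rw [h5, hidef]
    rw [(QE m ⟨_, hO⟩).apply_symm_apply]
  exact ⟨Equiv.ofBijective f ⟨hinj, hsurj⟩, hiff⟩

end Main3

section Main4
variable {N : ℕ} {k : ℕ → ℕ} {n : ℕ}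

lemma conjHom_injective {α β : Type*} (ε : α ≃ β) : Function.Injective (conjHom ε) := by
  intro x y h
  have h2 := congrArg (conjHom ε.symm) h
  rwa [conjHom_symm_conjHom, conjHom_symm_conjHom] at h2

lemma conjHom_conjHom_symm {α β : Type*} (ε : α ≃ β) (f : Perm β) :
    conjHom ε (conjHom ε.symm f) = f := by
  ext x; simp [conjHom]

variable (e : PIdx N k ≃ ZMod n)

/-- The condition on `g` characterizing membership in a fiber of `Phi e`. -/
def CondG (t : Perm (Xn n)) (g : Perm (ZMod n)) : Prop :=
  ∀ a b : PIdx N k, (t.SameCycle (g (e a), true) (g (e b), true) ↔ a.1 = b.1)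

lemma sc_eta {t : Perm (Xn n)} (hch : IsChart t) {g : Perm (ZMod n)} (hg : CondG e t g)
    (d d' : Dom N k) : t.SameCycle (eta e g d) (eta e g d') ↔ d.1 = d'.1 := by
  obtain ⟨p, i, b⟩ := d
  obtain ⟨p', i', b'⟩ := d'
  show t.SameCycle (g (e ⟨p, i⟩), b) (g (e ⟨p', i'⟩), b') ↔ p = p'
  constructor
  · intro h
    have h2 : t.SameCycle (g (e ⟨p, i⟩), true) (g (e ⟨p', i'⟩), true) :=
      ((sc_true hch (g (e ⟨p, i⟩), b)).symm.trans h).trans (sc_true hch (g (e ⟨p', i'⟩), b'))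
    exact (hg ⟨p, i⟩ ⟨p', i'⟩).mp h2
  · intro h
    have h2 := (hg ⟨p, i⟩ ⟨p', i'⟩).mpr h
    exact ((sc_true hch (g (e ⟨p, i⟩), b)).trans h2).trans
      (sc_true hch (g (e ⟨p', i'⟩), b')).symm

lemma fiber_equiv_cond (hk0 : k 0 = 0) (t : Perm (Xn n)) (hch : IsChart t) :
    Nonempty ({gc : Perm (ZMod n) × CFam N k // Phi e gc.1 gc.2 = t} ≃
      {g : Perm (ZMod n) // CondG e t g}) := by
  have hcond : ∀ gc : {gc : Perm (ZMod n) × CFam N k // Phi e gc.1 gc.2 = t},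
      CondG e t gc.1.1 := by
    rintro ⟨⟨g, c⟩, hΦ⟩
    intro a b
    have h := sameCycle_phi e g c ⟨a.1, (a.2, true)⟩ ⟨b.1, (b.2, true)⟩
    rw [hΦ] at h
    exact h
  refine ⟨Equiv.ofBijective (fun gc => ⟨gc.1.1, hcond gc⟩) ⟨?_, ?_⟩⟩
  · rintro ⟨⟨g, c⟩, hΦ⟩ ⟨⟨g', c'⟩, hΦ'⟩ hgg
    simp only [Subtype.mk.injEq] at hgg
    subst hgg
    apply Subtype.ext
    simp only [Prod.mk.injEq, true_and]
    have h1 : sigmaPart c = sigmaPart c' := by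
      apply conjHom_injective (eta e g)
      show Phi e g c = Phi e g c'
      rw [hΦ, hΦ']
    have h2 := Equiv.Perm.sigmaCongrRightHom_injective h1
    funext p
    apply Subtype.ext
    apply conjHom_injective (bE (p.1 : ℕ)).symm
    exact congrFun h2 p
  · rintro ⟨g, hg⟩
    set σ : Perm (Dom N k) := conjHom (eta e g).symm t with hσdef
    have hconj : ∀ d : Dom N k, eta e g (σ d) = t (eta e g d) := by
      intro d
      rw [hσdef, conjHom_apply']
      simp
    have hfst : ∀ d : Dom N k, (σ d).1 = d.1 := by
      intro d
      have hsc : t.SameCycle (eta e g d) (eta e g (σ d)) := by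
        rw [hconj d]
        exact ⟨1, by simp⟩
      exact ((sc_eta e hch hg d (σ d)).mp hsc).symm
    obtain ⟨F, hF⟩ := exists_sigmaCongrRightHom_eq σ hfst
    have hscF : ∀ (p : BIdx N k) (x y : Fin (p.1 : ℕ) × Bool), (F p).SameCycle x y := by
      intro p x y
      rw [← sigmaCongrRightHom_sameCycle F p x y, hF]
      have hx : (⟨p, x⟩ : Dom N k) = (eta e g).symm (eta e g ⟨p, x⟩) := by simp
      have hy : (⟨p, y⟩ : Dom N k) = (eta e g).symm (eta e g ⟨p, y⟩) := by simp
      rw [hσdef, hx, hy, conjHom_sameCycle]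
      exact (sc_eta e hch hg _ _).mpr rfl
    have hcyc : ∀ p : BIdx N k, (conjHom (bE (p.1 : ℕ)) (F p)).IsCycle ∧
        (conjHom (bE (p.1 : ℕ)) (F p)).support = Finset.univ := by
      intro p
      apply fullCycle_of_sameCycle
      · have := bidx_pos hk0 p
        simp only [Fintype.card_fin]
        omega
      · intro u w
        have hu : u = bE (p.1 : ℕ) ((bE (p.1 : ℕ)).symm u) := by simp
        have hw : w = bE (p.1 : ℕ) ((bE (p.1 : ℕ)).symm w) := by simp
        rw [hu, hw, conjHom_sameCycle]
        exact hscF p _ _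
    refine ⟨⟨⟨g, fun p => ⟨conjHom (bE (p.1 : ℕ)) (F p), hcyc p⟩⟩, ?_⟩, rfl⟩
    show conjHom (eta e g) (sigmaPart _) = t
    have h6 : sigmaPart (fun p => (⟨conjHom (bE (p.1 : ℕ)) (F p), hcyc p⟩ :
        Cyc (2 * (p.1 : ℕ)))) = σ := by
      rw [sigmaPart, ← hF]
      congr 1
      funext p
      exact conjHom_symm_conjHom (bE (p.1 : ℕ)) (F p)
    rw [h6, hσdef, conjHom_conjHom_symm]

lemma cond_equiv_aut (t : Perm (Xn n)) (e' : PIdx N k ≃ ZMod n)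
    (He' : ∀ a b : PIdx N k, (t.SameCycle (e' a, true) (e' b, true) ↔ a.1 = b.1)) :
    Nonempty ({g : Perm (ZMod n) // CondG e t g} ≃
      {h : Perm (PIdx N k) // ∀ a b : PIdx N k, (h a).1 = (h b).1 ↔ a.1 = b.1}) := by
  refine ⟨{ toFun := fun gs => ⟨(e.trans (gs.1.trans e'.symm) : Perm (PIdx N k)), ?_⟩
            invFun := fun hs => ⟨(e.symm.trans (hs.1.trans e') : Perm (ZMod n)), ?_⟩
            left_inv := ?_
            right_inv := ?_ }⟩
  · intro a b
    have h1 := He' (e'.symm (gs.1 (e a))) (e'.symm (gs.1 (e b)))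
    rw [Equiv.apply_symm_apply, Equiv.apply_symm_apply] at h1
    exact h1.symm.trans (gs.2 a b)
  · intro a b
    show t.SameCycle (e' (hs.1 (e.symm (e a))), true) (e' (hs.1 (e.symm (e b))), true) ↔ _
    rw [Equiv.symm_apply_apply, Equiv.symm_apply_apply]
    exact (He' (hs.1 a) (hs.1 b)).trans (hs.2 a b)
  · rintro ⟨g, hg⟩
    apply Subtype.ext
    refine Equiv.ext fun z => ?_
    simp
  · rintro ⟨h, hh⟩
    apply Subtype.ext
    refine Equiv.ext fun a => ?_
    simp

end Main4

section Counting
variable {N : ℕ} {k : ℕ → ℕ} {n : ℕ}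

lemma card_pidx (hn : n = ∑ m ∈ Finset.range (N + 1), m * k m) :
    Nat.card (PIdx N k) = n := by
  rw [Nat.card_eq_fintype_card, Fintype.card_sigma]
  rw [show (Finset.univ : Finset (BIdx N k)) = Finset.univ.sigma (fun _ => Finset.univ) from
    (Finset.univ_sigma_univ).symm, Finset.sum_sigma]
  have h1 : ∀ m : Fin (N + 1), ∑ j : Fin (k m), Fintype.card (Fin ((m : ℕ))) = (m : ℕ) * k m := by
    intro m
    simp [Finset.sum_const, mul_comm]
  calc ∑ m : Fin (N + 1), ∑ j : Fin (k m), Fintype.card (Fin ((⟨m, j⟩ : BIdx N k).1 : ℕ))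
      = ∑ m : Fin (N + 1), ((m : ℕ) * k m) := by
        refine Finset.sum_congr rfl fun m _ => h1 m
    _ = ∑ m ∈ Finset.range (N + 1), m * k m := Fin.sum_univ_eq_sum_range (fun i => i * k i) (N + 1)
    _ = n := hn.symm

lemma card_cfam (hk0 : k 0 = 0) :
    Nat.card (CFam N k) = ∏ m ∈ Finset.range (N + 1),
      (Nat.factorial (2 * m - 1)) ^ (k m) := by
  rw [Nat.card_pi]
  rw [show (Finset.univ : Finset (BIdx N k)) = Finset.univ.sigma (fun _ => Finset.univ) from
    (Finset.univ_sigma_univ).symm, Finset.prod_sigma]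
  have h1 : ∀ m : Fin (N + 1), ∏ j : Fin (k m), Nat.card (Cyc (2 * (m : ℕ))) =
      (Nat.factorial (2 * (m : ℕ) - 1)) ^ (k m) := by
    intro m
    rcases Nat.eq_zero_or_pos (k m) with h0 | h0
    · rw [h0]
      simp [h0]
    · have hm1 : 1 ≤ (m : ℕ) := bidx_pos hk0 ⟨m, ⟨0, h0⟩⟩
      rw [Finset.prod_const, card_cyc (by omega), Finset.card_univ, Fintype.card_fin]
  calc ∏ m : Fin (N + 1), ∏ j : Fin (k m), Nat.card (Cyc (2 * ((⟨m, j⟩ : BIdx N k).1 : ℕ)))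
      = ∏ m : Fin (N + 1), (Nat.factorial (2 * (m : ℕ) - 1)) ^ (k m) := by
        refine Finset.prod_congr rfl fun m _ => h1 m
    _ = ∏ m ∈ Finset.range (N + 1), (Nat.factorial (2 * m - 1)) ^ (k m) :=
        Fin.prod_univ_eq_prod_range (fun i => (Nat.factorial (2 * i - 1)) ^ (k i)) (N + 1)

lemma card_ltyp :
    Nat.card ((m : Fin (N + 1)) → Perm (Fin (k m)) × (Fin (k m) → Perm (Fin (m : ℕ)))) =
      ∏ m ∈ Finset.range (N + 1), Nat.factorial (k m) * (Nat.factorial m) ^ (k m) := by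
  rw [Nat.card_pi]
  have h1 : ∀ m : Fin (N + 1),
      Nat.card (Perm (Fin (k m)) × (Fin (k m) → Perm (Fin (m : ℕ)))) =
      Nat.factorial (k m) * (Nat.factorial (m : ℕ)) ^ (k m) := by
    intro m
    rw [Nat.card_prod, Nat.card_pi]
    congr 1
    · rw [Nat.card_eq_fintype_card, Fintype.card_perm, Fintype.card_fin]
    · rw [Finset.prod_const, Finset.card_univ, Fintype.card_fin,
        Nat.card_eq_fintype_card, Fintype.card_perm, Fintype.card_fin]
  calc ∏ m : Fin (N + 1), Nat.card (Perm (Fin (k m)) × (Fin (k m) → Perm (Fin (m : ℕ))))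
      = ∏ m : Fin (N + 1), Nat.factorial (k m) * (Nat.factorial (m : ℕ)) ^ (k m) :=
        Finset.prod_congr rfl fun m _ => h1 m
    _ = _ := Fin.prod_univ_eq_prod_range (fun i => Nat.factorial (k i) * (Nat.factorial i) ^ (k i)) (N + 1)

end Counting

/-- the number of charts `(n,t)` with exactly `k_m` orbits of cardinality
`2m` for every `m ≥ 1`, where `n = Σ_m m·k_m > 0`, equals
`n! ∏_m (1/k_m!)·((2m-1)!/m!)^{k_m}` (stated multiplicatively). -/
theorem stmt11 (N : ℕ) (k : ℕ → ℕ) (hk0 : k 0 = 0) (hk : ∀ m, N < m → k m = 0)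
    (hne : ∃ m, k m ≠ 0) (n : ℕ) (hn : n = ∑ m ∈ Finset.range (N + 1), m * k m) :
    Set.ncard {t : Equiv.Perm (Xn n) | IsChart t ∧
        ∀ m : ℕ, 1 ≤ m →
          Set.ncard {O : Set (Xn n) |
            (∃ a : Xn n, O = {x | ∃ s : ℤ, (t ^ s) a = x}) ∧ O.ncard = 2 * m} = k m} *
      ∏ m ∈ Finset.range (N + 1), Nat.factorial (k m) * (Nat.factorial m) ^ (k m) =
    Nat.factorial n *
      ∏ m ∈ Finset.range (N + 1), (Nat.factorial (2 * m - 1)) ^ (k m) := by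
  classical
  -- positivity of n
  obtain ⟨m₀, hm₀⟩ := hne
  have hm₀N : m₀ ≤ N := by
    by_contra h
    exact hm₀ (hk m₀ (by omega))
  have hm₀1 : 1 ≤ m₀ := by
    rcases Nat.eq_zero_or_pos m₀ with h | h
    · exact absurd (h ▸ hk0) hm₀
    · omega
  have hnpos : 0 < n := by
    rw [hn]
    have h1 : 0 < m₀ * k m₀ := by
      have := Nat.pos_of_ne_zero hm₀
      exact Nat.mul_pos (by omega) this
    have h2 : m₀ * k m₀ ≤ ∑ m ∈ Finset.range (N + 1), m * k m :=
      Finset.single_le_sum (f := fun m => m * k m) (fun i _ => Nat.zero_le _)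
        (Finset.mem_range.mpr (by omega))
    omega
  haveI : NeZero n := ⟨hnpos.ne'⟩
  -- base equivalence
  have hcard : Fintype.card (PIdx N k) = Fintype.card (ZMod n) := by
    rw [ZMod.card, ← Nat.card_eq_fintype_card, card_pidx hn]
  set e : PIdx N k ≃ ZMod n := Fintype.equivOfCardEq hcard with hedef
  set S : Set (Perm (Xn n)) := {t : Equiv.Perm (Xn n) | IsChart t ∧
        ∀ m : ℕ, 1 ≤ m →
          Set.ncard {O : Set (Xn n) |
            (∃ a : Xn n, O = {x | ∃ s : ℤ, (t ^ s) a = x}) ∧ O.ncard = 2 * m} = k m}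
    with hSdef
  have hSmem : ∀ t : Perm (Xn n),
      t ∈ S ↔ (IsChart t ∧ ∀ m, 1 ≤ m → (orbSet t m).ncard = k m) := fun t => Iff.rfl
  -- every Phi lands in S
  have key1 : ∀ gc : Perm (ZMod n) × CFam N k, Phi e gc.1 gc.2 ∈ S.toFinset := by
    intro gc
    rw [Set.mem_toFinset, hSmem]
    exact ⟨isChart_phi e gc.1 gc.2, fun m hm => counts_phi e gc.1 gc.2 hk0 hk m hm⟩
  have key2 := Finset.card_eq_sum_card_fiberwise (s := Finset.univ) (t := S.toFinset)
    (f := fun gc : Perm (ZMod n) × CFam N k => Phi e gc.1 gc.2) (fun gc _ => key1 gc)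
  -- each fiber has the same cardinality
  have key3 : ∀ t ∈ S.toFinset,
      (Finset.univ.filter fun gc : Perm (ZMod n) × CFam N k => Phi e gc.1 gc.2 = t).card =
      Nat.card ((m : Fin (N + 1)) → Perm (Fin (k m)) × (Fin (k m) → Perm (Fin (m : ℕ)))) := by
    intro t ht
    rw [Set.mem_toFinset, hSmem] at ht
    obtain ⟨hch, hcnt⟩ := ht
    obtain ⟨e', He'⟩ := exists_good_equiv hk0 hk hch hcnt
    obtain ⟨E1⟩ := fiber_equiv_cond e hk0 t hch
    obtain ⟨E2⟩ := cond_equiv_aut e t e' He'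
    have hEq := Nat.card_congr (E1.trans (E2.trans (autEquiv hk0)))
    rw [← hEq, Nat.card_eq_fintype_card, Fintype.card_subtype]
  -- combine
  have key4 : Fintype.card (Perm (ZMod n) × CFam N k) =
      S.toFinset.card *
        Nat.card ((m : Fin (N + 1)) → Perm (Fin (k m)) × (Fin (k m) → Perm (Fin (m : ℕ)))) := by
    rw [← Finset.card_univ, key2, Finset.sum_congr rfl key3, Finset.sum_const, smul_eq_mul]
  have key5 : Fintype.card (Perm (ZMod n) × CFam N k) =
      Nat.factorial n * ∏ m ∈ Finset.range (N + 1), (Nat.factorial (2 * m - 1)) ^ (k m) := by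
    rw [Fintype.card_prod, Fintype.card_perm, ZMod.card,
      ← Nat.card_eq_fintype_card (α := CFam N k), card_cfam hk0]
  rw [Set.ncard_eq_toFinset_card' S, ← card_ltyp (N := N) (k := k), ← key4, key5]
end

section
/- Let K = (k_1, k_2, ...) be a finite sequence of non-negative integers, not all zero, and set n = Σ_m m·k_m. The number of semicharts (n, v, S) such that v has exactly k_m orbits of cardinality m for every m ≥ 1 equals n! · ∏_{m≥1} (1/k_m!) · (2^{m-1}/m)^{k_m}. -/
open Equiv Finset
set_option linter.unusedSectionVars false

namespace Stmt12

variable {α : Type*} [Fintype α] [DecidableEq α]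

def orb (σ : Equiv.Perm α) (a : α) : Set α := {x | ∃ s : ℕ, (σ ^ s) a = x}

lemma mem_orb {σ : Equiv.Perm α} {a b : α} : b ∈ orb σ a ↔ σ.SameCycle a b := by
  constructor
  · rintro ⟨s, rfl⟩; exact ⟨s, by simp⟩
  · intro h
    obtain ⟨i, _, h⟩ := h.exists_pow_eq'
    exact ⟨i, h⟩

def oSetoid (σ : Equiv.Perm α) : Setoid α :=
  ⟨σ.SameCycle, ⟨fun _ => Equiv.Perm.SameCycle.refl σ _, Equiv.Perm.SameCycle.symm,
    Equiv.Perm.SameCycle.trans⟩⟩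

abbrev Q (σ : Equiv.Perm α) := Quotient (oSetoid σ)

noncomputable instance (σ : Equiv.Perm α) : Fintype (Q σ) :=
  @Fintype.ofFinite _ (Quotient.finite _)

def qmk (σ : Equiv.Perm α) (a : α) : Q σ := Quotient.mk (oSetoid σ) a

def cls (σ : Equiv.Perm α) (q : Q σ) : Set α := {x | qmk σ x = q}

lemma orb_eq_cls (σ : Equiv.Perm α) (a : α) : orb σ a = cls σ (qmk σ a) := by
  ext x
  rw [mem_orb]
  show σ.SameCycle a x ↔ Quotient.mk _ x = Quotient.mk _ a
  rw [Quotient.eq]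
  exact ⟨fun h => h.symm, fun h => Equiv.Perm.SameCycle.symm h⟩

lemma cls_nonempty (σ : Equiv.Perm α) (q : Q σ) : (cls σ q).Nonempty := by
  obtain ⟨a, rfl⟩ := Quotient.exists_rep q
  exact ⟨a, rfl⟩

lemma one_le_card_cls (σ : Equiv.Perm α) (q : Q σ) : 1 ≤ Nat.card (cls σ q) := by
  have := (cls_nonempty σ q).to_subtype
  exact Nat.one_le_iff_ne_zero.mpr (Nat.card_ne_zero.mpr ⟨this, Set.toFinite _⟩)

/-- number of orbits of size m, matching the statement's formulation -/
noncomputable def ocount (σ : Equiv.Perm α) (m : ℕ) : ℕ :=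
  Set.ncard {O : Set α | (∃ a, O = orb σ a) ∧ O.ncard = m}

lemma ocount_eq_qcount (σ : Equiv.Perm α) (m : ℕ) :
    ocount σ m = Nat.card {q : Q σ // (cls σ q).ncard = m} := by
  rw [ocount, ← Nat.card_coe_set_eq]
  refine Nat.card_congr (Equiv.symm (Equiv.ofBijective
    (fun q => (⟨cls σ q.1, by
      obtain ⟨a, ha⟩ := Quotient.exists_rep q.1
      exact ⟨a, by rw [← ha]; exact (orb_eq_cls σ a).symm⟩, q.2⟩ :
      {O : Set α | (∃ a, O = orb σ a) ∧ O.ncard = m})) ⟨?_, ?_⟩))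
  · rintro ⟨q, hq⟩ ⟨q', hq'⟩ h
    simp only [Subtype.mk.injEq] at h
    obtain ⟨a, rfl⟩ := Quotient.exists_rep q
    have : a ∈ cls σ q' := h ▸ rfl
    exact Subtype.ext this
  · rintro ⟨O, ⟨a, rfl⟩, hm⟩
    exact ⟨⟨qmk σ a, by rw [← orb_eq_cls]; exact hm⟩, by simp [orb_eq_cls]⟩

section Odd

lemma card_odd_finsets (γ : Type*) [Fintype γ] [DecidableEq γ] [Nonempty γ] :
    Nat.card {T : Finset γ // Odd T.card} = 2 ^ (Fintype.card γ - 1) := by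
  classical
  obtain ⟨a⟩ := ‹Nonempty γ›
  set t : Finset γ → Finset γ := fun T => if a ∈ T then T.erase a else insert a T with ht
  have htt : ∀ T, t (t T) = T := by
    intro T
    by_cases h : a ∈ T <;> simp [ht, h, Finset.erase_insert, Finset.insert_erase]
  have hodd : ∀ T, Odd (t T).card ↔ ¬ Odd T.card := by
    intro T
    by_cases h : a ∈ T
    · have hc : 1 ≤ T.card := Finset.card_pos.mpr ⟨a, h⟩
      have h1 : T.card = (t T).card + 1 := by
        simp only [ht, if_pos h]
        rw [Finset.card_erase_of_mem h]
        omega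
      rw [h1, Nat.odd_add_one]
      tauto
    · have h1 : (t T).card = T.card + 1 := by
        simp only [ht, if_neg h, Finset.card_insert_of_notMem h]
      rw [h1, Nat.odd_add_one]
  have e : {T : Finset γ // Odd T.card} ≃ {T : Finset γ // ¬ Odd T.card} :=
    { toFun := fun T => ⟨t T.1, fun h => (hodd T.1).mp h T.2⟩
      invFun := fun T => ⟨t T.1, (hodd T.1).mpr T.2⟩
      left_inv := fun T => Subtype.ext (htt T.1)
      right_inv := fun T => Subtype.ext (htt T.1) }
  have h1 : Fintype.card {T : Finset γ // Odd T.card} =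
      Fintype.card {T : Finset γ // ¬ Odd T.card} := Fintype.card_congr e
  have h2 : Fintype.card {T : Finset γ // ¬ Odd T.card} =
      Fintype.card (Finset γ) - Fintype.card {T : Finset γ // Odd T.card} :=
    Fintype.card_subtype_compl _
  have h3 : Fintype.card {T : Finset γ // Odd T.card} ≤ Fintype.card (Finset γ) :=
    Fintype.card_subtype_le _
  have h4 : Fintype.card (Finset γ) = 2 ^ Fintype.card γ := Fintype.card_finset
  have h5 : (2:ℕ) * 2 ^ (Fintype.card γ - 1) = 2 ^ Fintype.card γ := by
    rw [← pow_succ']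
    congr 1
    have := Fintype.card_pos (α := γ)
    omega
  rw [Nat.card_eq_fintype_card]
  omega

end Odd

lemma card_S (σ : Equiv.Perm α) :
    Nat.card {S : Finset α // ∀ a : α, Odd (Set.ncard {x | x ∈ S ∧ x ∈ orb σ a})}
      = ∏ q : Q σ, 2 ^ (Nat.card (cls σ q) - 1) := by
  classical
  have key : ∀ (S : Finset α) (a : α),
      {x | x ∈ S ∧ x ∈ orb σ a} = ↑(S.filter (fun x => qmk σ x = qmk σ a)) := by
    intro S a
    ext x
    simp only [Set.mem_setOf_eq, Finset.coe_filter, orb_eq_cls]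
    exact Iff.rfl
  have hcond : ∀ S : Finset α,
      (∀ a : α, Odd (Set.ncard {x | x ∈ S ∧ x ∈ orb σ a})) ↔
      (∀ q : Q σ, Odd ((S.subtype (fun x => qmk σ x = q)).card)) := by
    intro S
    constructor
    · intro h q
      obtain ⟨a, rfl⟩ := Quotient.exists_rep q
      have := h a
      rwa [key S a, Set.ncard_coe_finset, ← Finset.card_subtype] at this
    · intro h a
      rw [key S a, Set.ncard_coe_finset, ← Finset.card_subtype]
      exact h (qmk σ a)
  have claim : ∀ (f : ∀ q : Q σ, {T : Finset {x // qmk σ x = q} // Odd T.card}) (q : Q σ),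
      (Finset.univ.filter
        (fun x => (⟨x, rfl⟩ : {y // qmk σ y = qmk σ x}) ∈ (f (qmk σ x)).1)).subtype
        (fun x => qmk σ x = q) = (f q).1 := by
    intro f q
    ext ⟨x, hx⟩
    rw [Finset.mem_subtype]
    simp only [Finset.mem_filter, Finset.mem_univ, true_and]
    subst hx
    exact Iff.rfl
  have E : {S : Finset α // ∀ q : Q σ, Odd ((S.subtype (fun x => qmk σ x = q)).card)} ≃
      (∀ q : Q σ, {T : Finset {x // qmk σ x = q} // Odd T.card}) :=
    { toFun := fun S q => ⟨S.1.subtype _, S.2 q⟩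
      invFun := fun f => ⟨Finset.univ.filter
          (fun x => (⟨x, rfl⟩ : {y // qmk σ y = qmk σ x}) ∈ (f (qmk σ x)).1),
        fun q => by rw [claim f q]; exact (f q).2⟩
      left_inv := fun S => by
        apply Subtype.ext
        ext x
        simp only [Finset.mem_filter, Finset.mem_univ, true_and, Finset.mem_subtype]
      right_inv := fun f => by
        funext q
        exact Subtype.ext (claim f q) }
  calc Nat.card {S : Finset α // ∀ a : α, Odd (Set.ncard {x | x ∈ S ∧ x ∈ orb σ a})}
      = Nat.card {S : Finset α // ∀ q : Q σ, Odd ((S.subtype (fun x => qmk σ x = q)).card)} :=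
        Nat.card_congr (Equiv.subtypeEquivRight hcond)
    _ = Nat.card (∀ q : Q σ, {T : Finset {x // qmk σ x = q} // Odd T.card}) := Nat.card_congr E
    _ = ∏ q : Q σ, Nat.card {T : Finset {x // qmk σ x = q} // Odd T.card} := Nat.card_pi
    _ = ∏ q : Q σ, 2 ^ (Nat.card (cls σ q) - 1) := by
        apply Finset.prod_congr rfl
        intro q _
        have hne : Nonempty {x // qmk σ x = q} := by
          obtain ⟨a, rfl⟩ := Quotient.exists_rep q
          exact ⟨⟨a, rfl⟩⟩
        rw [card_odd_finsets]
        congr 1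
        have : Nat.card (cls σ q) = Fintype.card {x // qmk σ x = q} := by
          rw [Nat.card_eq_fintype_card]
          exact Fintype.card_congr (Equiv.subtypeEquivRight fun x => Iff.rfl)
        rw [this]

lemma ocount_pos_of_mem (σ : Equiv.Perm α) (q : Q σ) : 1 ≤ ocount σ ((cls σ q).ncard) := by
  rw [ocount_eq_qcount]
  have : Nonempty {q' : Q σ // (cls σ q').ncard = (cls σ q).ncard} := ⟨⟨q, rfl⟩⟩
  exact Nat.one_le_iff_ne_zero.mpr (Nat.card_ne_zero.mpr ⟨this, Subtype.finite⟩)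

lemma ncard_cls_pos (σ : Equiv.Perm α) (q : Q σ) : 1 ≤ (cls σ q).ncard := by
  rw [← Nat.card_coe_set_eq]
  exact one_le_card_cls σ q

lemma prod_cls {N : ℕ} {k : ℕ → ℕ} (σ : Equiv.Perm α)
    (hk : ∀ m, N < m → k m = 0) (hk0 : k 0 = 0)
    (hP : ∀ m, 1 ≤ m → ocount σ m = k m) :
    ∏ q : Q σ, 2 ^ ((cls σ q).ncard - 1) =
      ∏ m ∈ Finset.range (N + 1), (2 ^ (m - 1)) ^ (k m) := by
  classical
  have maps : ∀ q ∈ Finset.univ, (cls σ q).ncard ∈ Finset.range (N + 1) := by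
    intro q _
    rw [Finset.mem_range]
    by_contra hgt
    have h1 := ncard_cls_pos σ q
    have h2 := ocount_pos_of_mem σ q
    rw [hP _ h1, hk _ (by omega)] at h2
    omega
  rw [← Finset.prod_fiberwise_of_maps_to maps (fun q => 2 ^ ((cls σ q).ncard - 1))]
  apply Finset.prod_congr rfl
  intro m hm
  have : ∀ q ∈ Finset.univ.filter (fun q : Q σ => (cls σ q).ncard = m),
      2 ^ ((cls σ q).ncard - 1) = 2 ^ (m - 1) := by
    intro q hq
    rw [(Finset.mem_filter.mp hq).2]
  rw [Finset.prod_congr rfl this, Finset.prod_const]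
  congr 1
  have hcard : (Finset.univ.filter (fun q : Q σ => (cls σ q).ncard = m)).card
      = Nat.card {q : Q σ // (cls σ q).ncard = m} := by
    rw [Nat.card_eq_fintype_card, Fintype.card_subtype]
  rcases Nat.eq_zero_or_pos m with rfl | hm1
  · rw [hcard, ← ocount_eq_qcount, hk0]
    have : ∀ q : Q σ, ¬ ((cls σ q).ncard = 0) := fun q h => by
      have := ncard_cls_pos σ q; omega
    rw [ocount_eq_qcount]
    simp only [Nat.card_eq_fintype_card, Fintype.card_eq_zero_iff]
    constructor
    rintro ⟨q, hq⟩
    exact this q hq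
  · rw [hcard, ← ocount_eq_qcount, hP m hm1]

lemma orb_of_fixed {σ : Equiv.Perm α} {a : α} (h : σ a = a) : orb σ a = {a} := by
  ext x
  constructor
  · rintro ⟨s, rfl⟩
    induction s with
    | zero => rfl
    | succ i ih => rw [pow_succ, Equiv.Perm.mul_apply, h]; exact ih
  · rintro rfl
    exact ⟨0, rfl⟩

lemma orb_eq_support_cycleOf {σ : Equiv.Perm α} {a : α} (ha : a ∈ σ.support) :
    orb σ a = ↑(σ.cycleOf a).support := by
  ext x
  rw [mem_orb, Finset.mem_coe, Equiv.Perm.mem_support_cycleOf_iff]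
  exact ⟨fun h => ⟨h, ha⟩, fun h => h.1⟩

lemma ocount_eq_count (σ : Equiv.Perm α) {m : ℕ} (hm : 2 ≤ m) :
    ocount σ m = σ.cycleType.count m := by
  classical
  have hcount : σ.cycleType.count m
      = (σ.cycleFactorsFinset.filter (fun c => m = c.support.card)).card := by
    rw [Equiv.Perm.cycleType_def, Multiset.count_map]
    rfl
  rw [hcount, ← Fintype.card_coe, ← Nat.card_eq_fintype_card, ocount, ← Nat.card_coe_set_eq]
  apply Nat.card_congr
  symm
  apply Equiv.ofBijective (f := fun c =>
    (⟨(↑(c.1 : Equiv.Perm α).support : Set α), by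
      have hc := Finset.mem_filter.mp c.2
      have hcyc := (Equiv.Perm.mem_cycleFactorsFinset_iff.mp hc.1)
      obtain ⟨a, ha⟩ := hcyc.1.nonempty_support
      have haσ : a ∈ σ.support := by
        rw [Equiv.Perm.mem_support, ← hcyc.2 a ha]
        exact Equiv.Perm.mem_support.mp ha
      constructor
      · refine ⟨a, ?_⟩
        rw [orb_eq_support_cycleOf haσ, ← Equiv.Perm.cycle_is_cycleOf ha hc.1]
      · rw [Set.ncard_coe_finset]
        exact hc.2.symm⟩ :
        {O : Set α | (∃ a, O = orb σ a) ∧ O.ncard = m}))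
  constructor
  · rintro ⟨c, hc⟩ ⟨c', hc'⟩ h
    simp only [Subtype.mk.injEq, Finset.coe_inj] at h
    have hc2 := Finset.mem_filter.mp hc
    have hc'2 := Finset.mem_filter.mp hc'
    obtain ⟨a, ha⟩ := (Equiv.Perm.mem_cycleFactorsFinset_iff.mp hc2.1).1.nonempty_support
    have ha' : a ∈ c'.support := h ▸ ha
    apply Subtype.ext
    show c = c'
    rw [Equiv.Perm.cycle_is_cycleOf ha hc2.1, Equiv.Perm.cycle_is_cycleOf ha' hc'2.1]
  · rintro ⟨O, ⟨a, rfl⟩, hOm⟩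
    have haσ : a ∈ σ.support := by
      rw [Equiv.Perm.mem_support]
      intro hfix
      rw [orb_of_fixed hfix, Set.ncard_singleton] at hOm
      omega
    refine ⟨⟨σ.cycleOf a, Finset.mem_filter.mpr
      ⟨Equiv.Perm.cycleOf_mem_cycleFactorsFinset_iff.mpr haσ, ?_⟩⟩, ?_⟩
    · rw [← hOm, orb_eq_support_cycleOf haσ, Set.ncard_coe_finset]
    · apply Subtype.ext
      exact (orb_eq_support_cycleOf haσ).symm

lemma cycleType_eq_of_ocount {σ τ : Equiv.Perm α}
    (h : ∀ m, 1 ≤ m → ocount σ m = ocount τ m) : σ.cycleType = τ.cycleType := by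
  ext m
  rcases le_or_gt 2 m with hm | hm
  · rw [← ocount_eq_count σ hm, ← ocount_eq_count τ hm]
    exact h m (by omega)
  · rw [Multiset.count_eq_zero_of_notMem, Multiset.count_eq_zero_of_notMem]
    · intro hmem
      exact absurd (Equiv.Perm.two_le_of_mem_cycleType hmem) (by omega)
    · intro hmem
      exact absurd (Equiv.Perm.two_le_of_mem_cycleType hmem) (by omega)

section Transfer

variable {α₂ : Type*} [Fintype α₂] [DecidableEq α₂]

lemma permCongr_pow (e : α ≃ α₂) (σ : Equiv.Perm α) (s : ℕ) :
    (e.permCongr σ) ^ s = e.permCongr (σ ^ s) := by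
  induction s with
  | zero => ext x; simp
  | succ i ih =>
      rw [pow_succ, pow_succ, ih]
      ext x; simp

lemma orb_permCongr (e : α ≃ α₂) (σ : Equiv.Perm α) (a : α) :
    orb (e.permCongr σ) (e a) = e '' orb σ a := by
  ext x
  constructor
  · rintro ⟨s, rfl⟩
    exact ⟨(σ ^ s) a, ⟨s, rfl⟩, by rw [permCongr_pow]; simp⟩
  · rintro ⟨y, ⟨s, rfl⟩, rfl⟩
    exact ⟨s, by rw [permCongr_pow]; simp⟩

lemma ocount_permCongr (e : α ≃ α₂) (σ : Equiv.Perm α) (m : ℕ) :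
    ocount (e.permCongr σ) m = ocount σ m := by
  rw [ocount, ocount, ← Nat.card_coe_set_eq, ← Nat.card_coe_set_eq]
  apply Nat.card_congr
  symm
  apply Equiv.ofBijective (f := fun O => (⟨e '' O.1, by
    obtain ⟨⟨a, ha⟩, hm⟩ := O.2
    constructor
    · exact ⟨e a, by rw [orb_permCongr, ha]⟩
    · rw [Set.ncard_image_of_injective _ e.injective]; exact hm⟩ :
    {O : Set α₂ | (∃ a, O = orb (e.permCongr σ) a) ∧ O.ncard = m}))
  constructor
  · rintro ⟨O, hO⟩ ⟨O', hO'⟩ h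
    simp only [Subtype.mk.injEq] at h
    exact Subtype.ext (Set.image_injective.mpr e.injective h)
  · rintro ⟨O, ⟨b, rfl⟩, hm⟩
    have him : e '' orb σ (e.symm b) = orb (e.permCongr σ) b := by
      rw [← orb_permCongr]; simp
    refine ⟨⟨orb σ (e.symm b), ⟨e.symm b, rfl⟩, ?_⟩, ?_⟩
    · rw [← Set.ncard_image_of_injective _ e.injective, him]; exact hm
    · exact Subtype.ext him

end Transfer

section Model

variable (N : ℕ) (k : ℕ → ℕ)

abbrev B := Σ m : Fin (N + 1), Fin (k (m.1 + 1)) × ZMod (m.1 + 1)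

def g : Equiv.Perm (B N k) :=
  Equiv.sigmaCongrRight
    (fun m => Equiv.prodCongr (Equiv.refl _) (Equiv.addRight (1 : ZMod (m.1 + 1))))

lemma g_apply (m : Fin (N + 1)) (i : Fin (k (m.1 + 1))) (x : ZMod (m.1 + 1)) :
    g N k ⟨m, (i, x)⟩ = ⟨m, (i, x + 1)⟩ := rfl

lemma g_pow (s : ℕ) (m : Fin (N + 1)) (i : Fin (k (m.1 + 1))) (x : ZMod (m.1 + 1)) :
    ((g N k) ^ s) ⟨m, (i, x)⟩ = ⟨m, (i, x + s)⟩ := by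
  induction s with
  | zero => simp
  | succ t ih =>
      rw [pow_succ', Equiv.Perm.mul_apply, g_apply, ih]
      congr 2
      push_cast
      ring

def Ob (m : Fin (N + 1)) (i : Fin (k (m.1 + 1))) : Set (B N k) :=
  {b | ∃ y, b = ⟨m, (i, y)⟩}

lemma orb_g (m : Fin (N + 1)) (i : Fin (k (m.1 + 1))) (x : ZMod (m.1 + 1)) :
    orb (g N k) ⟨m, (i, x)⟩ = Ob N k m i := by
  ext b
  constructor
  · rintro ⟨s, rfl⟩
    rw [g_pow]
    exact ⟨x + s, rfl⟩
  · rintro ⟨y, rfl⟩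
    refine ⟨(y - x).val, ?_⟩
    rw [g_pow]
    congr 2
    rw [ZMod.natCast_rightInverse (y - x)]
    ring

lemma ncard_Ob (m : Fin (N + 1)) (i : Fin (k (m.1 + 1))) :
    (Ob N k m i).ncard = m.1 + 1 := by
  have : Ob N k m i = (fun y : ZMod (m.1 + 1) => (⟨m, (i, y)⟩ : B N k)) '' Set.univ := by
    ext b
    simp only [Set.image_univ, Set.mem_range, Ob, Set.mem_setOf_eq]
    exact ⟨fun ⟨y, h⟩ => ⟨y, h.symm⟩, fun ⟨y, h⟩ => ⟨y, h.symm⟩⟩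
  rw [this, Set.ncard_image_of_injective _ (fun y y' h => by simpa using h), Set.ncard_univ,
    Nat.card_eq_fintype_card, ZMod.card]

lemma Ob_inj {m m' : Fin (N + 1)} {i : Fin (k (m.1 + 1))} {i' : Fin (k (m'.1 + 1))}
    (h : Ob N k m i = Ob N k m' i') :
    (⟨m, i⟩ : Σ m : Fin (N + 1), Fin (k (m.1 + 1))) = ⟨m', i'⟩ := by
  have h0 : (⟨m, (i, 0)⟩ : B N k) ∈ Ob N k m i := ⟨0, rfl⟩
  rw [h] at h0
  obtain ⟨y, hy⟩ := h0
  obtain ⟨h1, h2⟩ := Sigma.mk.inj_iff.mp hy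
  subst h1
  rw [heq_iff_eq, Prod.mk.injEq] at h2
  rw [h2.1]

lemma card_idx (hk : ∀ m, N < m → k m = 0) {s : ℕ} (hs : 1 ≤ s) :
    Nat.card {p : Σ m : Fin (N + 1), Fin (k (m.1 + 1)) // p.1.1 + 1 = s} = k s := by
  classical
  have e : {p : Σ m : Fin (N + 1), Fin (k (m.1 + 1)) // p.1.1 + 1 = s} ≃
      Σ m : Fin (N + 1), {i : Fin (k (m.1 + 1)) // m.1 + 1 = s} :=
    { toFun := fun p => ⟨p.1.1, p.1.2, p.2⟩
      invFun := fun q => ⟨⟨q.1, q.2.1⟩, q.2.2⟩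
      left_inv := fun ⟨⟨m, i⟩, h⟩ => rfl
      right_inv := fun ⟨m, i, h⟩ => rfl }
  rw [Nat.card_congr e, Nat.card_eq_fintype_card, Fintype.card_sigma]
  have hterm : ∀ m : Fin (N + 1),
      Fintype.card {i : Fin (k (m.1 + 1)) // m.1 + 1 = s} =
        if m.1 + 1 = s then k (m.1 + 1) else 0 := by
    intro m
    by_cases h : m.1 + 1 = s
    · rw [if_pos h]
      rw [Fintype.card_congr (Equiv.subtypeUnivEquiv (fun _ => h)), Fintype.card_fin]
    · simp [h]
  rw [Finset.sum_congr rfl (fun m _ => hterm m)]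
  rw [Fin.sum_univ_eq_sum_range (fun j => if j + 1 = s then k (j + 1) else 0)]
  have : ∀ j ∈ Finset.range (N + 1),
      (if j + 1 = s then k (j + 1) else 0) = if j = s - 1 then k (j + 1) else 0 := by
    intro j _
    congr 1
    · simp only [eq_iff_iff]; omega
  rw [Finset.sum_congr rfl this, Finset.sum_ite_eq' (Finset.range (N + 1)) (s - 1)
    (fun j => k (j + 1))]
  by_cases hmem : s - 1 ∈ Finset.range (N + 1)
  · rw [if_pos hmem]
    congr 1
    omega
  · rw [if_neg hmem, hk s (by simp only [Finset.mem_range] at hmem; omega)]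

lemma ocount_g (hk : ∀ m, N < m → k m = 0) {s : ℕ} (hs : 1 ≤ s) :
    ocount (g N k) s = k s := by
  classical
  rw [← card_idx N k hk hs, ocount, ← Nat.card_coe_set_eq]
  apply Nat.card_congr
  symm
  apply Equiv.ofBijective (f := fun p => (⟨Ob N k p.1.1 p.1.2, by
    constructor
    · exact ⟨⟨p.1.1, (p.1.2, 0)⟩, (orb_g N k p.1.1 p.1.2 0).symm⟩
    · rw [ncard_Ob]; exact p.2⟩ :
    {O : Set (B N k) | (∃ a, O = orb (g N k) a) ∧ O.ncard = s}))
  constructor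
  · rintro ⟨p, hp⟩ ⟨p', hp'⟩ h
    simp only [Subtype.mk.injEq] at h
    exact Subtype.ext (Ob_inj N k h)
  · rintro ⟨O, ⟨⟨m, i, x⟩, rfl⟩, hOs⟩
    rw [orb_g, ncard_Ob] at hOs
    exact ⟨⟨⟨m, i⟩, hOs⟩, Subtype.ext (orb_g N k m i x).symm⟩

def Phi (f : ∀ m : Fin (N + 1),
    Equiv.Perm (Fin (k (m.1 + 1))) × (Fin (k (m.1 + 1)) → ZMod (m.1 + 1))) :
    Equiv.Perm (B N k) :=
  Equiv.sigmaCongrRight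
    (fun m => Equiv.prodShear (f m).1 (fun i => Equiv.addRight ((f m).2 i)))

lemma Phi_apply (f) (m : Fin (N + 1)) (i : Fin (k (m.1 + 1))) (x : ZMod (m.1 + 1)) :
    Phi N k f ⟨m, (i, x)⟩ = ⟨m, ((f m).1 i, x + (f m).2 i)⟩ := rfl

lemma comm_Phi (f) : Phi N k f * g N k = g N k * Phi N k f := by
  apply Equiv.ext
  rintro ⟨m, i, x⟩
  rw [Equiv.Perm.mul_apply, Equiv.Perm.mul_apply, g_apply, Phi_apply, Phi_apply, g_apply]
  exact congrArg (Sigma.mk m) (Prod.ext rfl (by ring))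

lemma sigma_pair_eq {m : Fin (N + 1)} {i i' : Fin (k (m.1 + 1))} {x x' : ZMod (m.1 + 1)}
    (h : (⟨m, (i, x)⟩ : B N k) = ⟨m, (i', x')⟩) : i = i' ∧ x = x' := by
  obtain ⟨-, h2⟩ := Sigma.mk.inj_iff.mp h
  rw [heq_iff_eq, Prod.mk.injEq] at h2
  exact h2

lemma comm_card :
    Nat.card {τ : Equiv.Perm (B N k) // τ * g N k = g N k * τ} =
      ∏ m : Fin (N + 1), (Nat.factorial (k (m.1 + 1)) * (m.1 + 1) ^ (k (m.1 + 1))) := by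
  classical
  have hbij : Function.Bijective (fun f => (⟨Phi N k f, comm_Phi N k f⟩ :
      {τ : Equiv.Perm (B N k) // τ * g N k = g N k * τ})) := by
    constructor
    · intro f f' h
      simp only [Subtype.mk.injEq] at h
      funext m
      have key : ∀ i : Fin (k (m.1 + 1)),
          (f m).1 i = (f' m).1 i ∧ (f m).2 i = (f' m).2 i := by
        intro i
        have := DFunLike.congr_fun h (⟨m, (i, 0)⟩ : B N k)
        rw [Phi_apply, Phi_apply] at this
        have := sigma_pair_eq N k this
        simpa using this
      exact Prod.ext (Equiv.ext fun i => (key i).1) (funext fun i => (key i).2)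
    · rintro ⟨τ, hτ⟩
      have hcomm : Commute τ (g N k) := hτ
      have hpow : ∀ (s : ℕ) (b : B N k), τ (((g N k) ^ s) b) = ((g N k) ^ s) (τ b) := by
        intro s b
        rw [← Equiv.Perm.mul_apply, (hcomm.pow_right s).eq, Equiv.Perm.mul_apply]
      have hpowinv : ∀ (s : ℕ) (b : B N k),
          τ⁻¹ (((g N k) ^ s) b) = ((g N k) ^ s) (τ⁻¹ b) := by
        intro s b
        rw [← Equiv.Perm.mul_apply, ((hcomm.inv_left).pow_right s).eq, Equiv.Perm.mul_apply]
      have hfst : ∀ (m : Fin (N + 1)) (i : Fin (k (m.1 + 1))),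
          ∃ (jj : Fin (k (m.1 + 1))) (cc : ZMod (m.1 + 1)), τ ⟨m, (i, 0)⟩ = ⟨m, (jj, cc)⟩ := by
        intro m i
        rcases hb : τ ⟨m, (i, 0)⟩ with ⟨m', i', x'⟩
        have h1 : ((g N k) ^ (m.1 + 1)) (⟨m', (i', x')⟩ : B N k) = ⟨m', (i', x')⟩ := by
          rw [← hb, ← hpow]
          rw [g_pow]
          rw [show ((0 : ZMod (m.1+1)) + ((m.1 + 1 : ℕ) : ZMod (m.1+1))) = 0 by
            rw [ZMod.natCast_self]; ring]
        have hdvd1 : (m'.1 + 1) ∣ (m.1 + 1) := by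
          rw [g_pow] at h1
          have := (sigma_pair_eq N k h1).2
          rw [add_eq_left] at this
          exact (ZMod.natCast_eq_zero_iff _ _).mp this
        have h2 : ((g N k) ^ (m'.1 + 1)) (⟨m, (i, 0)⟩ : B N k) = ⟨m, (i, 0)⟩ := by
          have h3 : ((g N k) ^ (m'.1 + 1)) (⟨m', (i', x')⟩ : B N k) = ⟨m', (i', x')⟩ := by
            rw [g_pow]
            rw [show (x' + ((m'.1 + 1 : ℕ) : ZMod (m'.1+1))) = x' by
              rw [ZMod.natCast_self]; ring]
          have := hpowinv (m'.1 + 1) ⟨m', (i', x')⟩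
          rw [h3, ← hb, Equiv.Perm.inv_def, Equiv.symm_apply_apply] at this
          exact this.symm
        have hdvd2 : (m.1 + 1) ∣ (m'.1 + 1) := by
          rw [g_pow] at h2
          have := (sigma_pair_eq N k h2).2
          rw [zero_add] at this
          exact (ZMod.natCast_eq_zero_iff _ _).mp this
        have hmm : m' = m := by
          have := Nat.dvd_antisymm hdvd1 hdvd2
          exact Fin.ext (by omega)
        subst hmm
        exact ⟨i', x', rfl⟩
      choose jj cc hjc using hfst
      have htau : ∀ (m : Fin (N + 1)) (i : Fin (k (m.1 + 1))) (x : ZMod (m.1 + 1)),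
          τ ⟨m, (i, x)⟩ = ⟨m, (jj m i, cc m i + x)⟩ := by
        intro m i x
        have hx : (⟨m, (i, x)⟩ : B N k) = ((g N k) ^ x.val) ⟨m, (i, 0)⟩ := by
          rw [g_pow, zero_add, ZMod.natCast_rightInverse x]
        rw [hx, hpow, hjc, g_pow, ZMod.natCast_rightInverse x]
      have hinj : ∀ m, Function.Injective (jj m) := by
        intro m i i' h
        have e1 := htau m i' (cc m i - cc m i')
        have e2 := htau m i 0
        rw [add_zero] at e2
        have : τ ⟨m, (i', cc m i - cc m i')⟩ = τ ⟨m, (i, 0)⟩ := by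
          rw [e1, e2, h]
          exact congrArg (Sigma.mk m) (Prod.ext rfl (by ring))
        have := τ.injective this
        exact ((sigma_pair_eq N k this).1).symm
      set f0 : ∀ m : Fin (N + 1),
          Equiv.Perm (Fin (k (m.1 + 1))) × (Fin (k (m.1 + 1)) → ZMod (m.1 + 1)) :=
        fun m => (Equiv.ofBijective (jj m)
          ((Finite.injective_iff_bijective).mp (hinj m)), cc m) with hf0
      refine ⟨f0, ?_⟩
      apply Subtype.ext
      apply Equiv.ext
      rintro ⟨m, i, x⟩
      show Phi N k f0 ⟨m, (i, x)⟩ = τ ⟨m, (i, x)⟩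
      rw [Phi_apply, htau]
      exact congrArg (Sigma.mk m) (Prod.ext rfl (by ring))
  rw [← Nat.card_congr (Equiv.ofBijective _ hbij), Nat.card_eq_fintype_card, Fintype.card_pi]
  apply Finset.prod_congr rfl
  intro m _
  rw [Fintype.card_prod, Fintype.card_perm, Fintype.card_fin, Fintype.card_fun,
    ZMod.card, Fintype.card_fin]


lemma card_B (hk : ∀ m, N < m → k m = 0) {n : ℕ}
    (hn : n = ∑ m ∈ Finset.range (N + 1), m * k m) : Fintype.card (B N k) = n := by
  rw [Fintype.card_sigma]
  have hc : ∀ m : Fin (N + 1),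
      Fintype.card (Fin (k (m.1 + 1)) × ZMod (m.1 + 1)) = k (m.1 + 1) * (m.1 + 1) := by
    intro m; rw [Fintype.card_prod, Fintype.card_fin, ZMod.card]
  rw [Finset.sum_congr rfl (fun m _ => hc m),
    Fin.sum_univ_eq_sum_range (fun j => k (j + 1) * (j + 1)), hn]
  have h1 := Finset.sum_range_succ (fun m => m * k m) (N + 1)
  have h2 := Finset.sum_range_succ' (fun m => m * k m) (N + 1)
  rw [hk (N + 1) (by omega), Nat.mul_zero] at h1
  have h1' : ∑ x ∈ Finset.range (N + 1 + 1), x * k x = ∑ x ∈ Finset.range (N + 1), x * k x := by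
    omega
  rw [← h1', h2]
  simp only [Nat.zero_mul, Nat.add_zero]
  exact Finset.sum_congr rfl fun j _ => Nat.mul_comm _ _

lemma prod_reindex (hk0 : k 0 = 0) (hk : ∀ m, N < m → k m = 0) :
    ∏ m : Fin (N + 1), (Nat.factorial (k (m.1 + 1)) * (m.1 + 1) ^ (k (m.1 + 1))) =
      ∏ m ∈ Finset.range (N + 1), Nat.factorial (k m) * m ^ (k m) := by
  rw [Fin.prod_univ_eq_prod_range (fun j => Nat.factorial (k (j + 1)) * (j + 1) ^ (k (j + 1)))]
  have h1 := Finset.prod_range_succ (fun m => Nat.factorial (k m) * m ^ (k m)) (N + 1)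
  have h2 := Finset.prod_range_succ' (fun m => Nat.factorial (k m) * m ^ (k m)) (N + 1)
  rw [hk (N + 1) (by omega)] at h1
  rw [hk0] at h2
  simp only [Nat.factorial_zero, pow_zero, Nat.mul_one, Nat.one_mul] at h1 h2
  rw [← h1, h2]

end Model

lemma card_S' (σ : Equiv.Perm α) :
    Nat.card {S : Finset α // ∀ a : α, Odd (Set.ncard {x | x ∈ S ∧ x ∈ orb σ a})}
      = ∏ q : Q σ, 2 ^ ((cls σ q).ncard - 1) := by
  rw [card_S σ]
  exact Finset.prod_congr rfl fun q _ => by rw [Nat.card_coe_set_eq]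

lemma conj_eq_permCongr (c σ : Equiv.Perm α) : c * σ * c⁻¹ = (Equiv.permCongr c) σ := by
  ext x; rfl

end Stmt12

/-- the number of semicharts `(n,v,S)` (a bijection `v` of `{1,...,n}`,
modelled on `ZMod n`, with `S` meeting every `v`-orbit in an odd number of elements)
such that `v` has exactly `k_m` orbits of cardinality `m` for every `m ≥ 1`, where
`n = Σ_m m·k_m > 0`, equals `n! ∏_m (1/k_m!)·(2^{m-1}/m)^{k_m}` (stated
multiplicatively). -/
theorem stmt12 (N : ℕ) (k : ℕ → ℕ) (hk0 : k 0 = 0) (hk : ∀ m, N < m → k m = 0)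
    (hne : ∃ m, k m ≠ 0) (n : ℕ) (hn : n = ∑ m ∈ Finset.range (N + 1), m * k m) :
    Set.ncard {p : Equiv.Perm (ZMod n) × Finset (ZMod n) |
        (∀ a : ZMod n,
          Odd (Set.ncard {x : ZMod n | x ∈ p.2 ∧ ∃ s : ℕ, (p.1 ^ s) a = x})) ∧
        ∀ m : ℕ, 1 ≤ m →
          Set.ncard {O : Set (ZMod n) |
            (∃ a : ZMod n, O = {x | ∃ s : ℕ, (p.1 ^ s) a = x}) ∧ O.ncard = m} = k m} *
      ∏ m ∈ Finset.range (N + 1), Nat.factorial (k m) * m ^ (k m) =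
    Nat.factorial n * ∏ m ∈ Finset.range (N + 1), (2 ^ (m - 1)) ^ (k m) := by
  classical
  obtain ⟨m₀, hm₀⟩ := hne
  have hm₀N : m₀ ≤ N := by
    by_contra h
    exact hm₀ (hk _ (by omega))
  have hm₀1 : 1 ≤ m₀ := by
    rcases Nat.eq_zero_or_pos m₀ with rfl | h
    · exact absurd hk0 hm₀
    · exact h
  have hnpos : 0 < n := by
    have hle : m₀ * k m₀ ≤ ∑ m ∈ Finset.range (N + 1), m * k m :=
      Finset.single_le_sum (f := fun m => m * k m) (fun i _ => Nat.zero_le _)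
        (Finset.mem_range.mpr (by omega))
    have h1 : 1 ≤ m₀ * k m₀ := Nat.one_le_iff_ne_zero.mpr
      (Nat.mul_ne_zero (by omega) hm₀)
    omega
  haveI : NeZero n := ⟨hnpos.ne'⟩
  have hcardB : Fintype.card (Stmt12.B N k) = n := Stmt12.card_B N k hk hn
  have e : Stmt12.B N k ≃ ZMod n := by
    apply Fintype.equivOfCardEq
    rw [hcardB, ZMod.card]
  -- Step 1: rewrite the LHS count as a Nat.card of a subtype
  have hset : {p : Equiv.Perm (ZMod n) × Finset (ZMod n) |
        (∀ a : ZMod n,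
          Odd (Set.ncard {x : ZMod n | x ∈ p.2 ∧ ∃ s : ℕ, (p.1 ^ s) a = x})) ∧
        ∀ m : ℕ, 1 ≤ m →
          Set.ncard {O : Set (ZMod n) |
            (∃ a : ZMod n, O = {x | ∃ s : ℕ, (p.1 ^ s) a = x}) ∧ O.ncard = m} = k m}
      = {p : Equiv.Perm (ZMod n) × Finset (ZMod n) |
        (∀ a : ZMod n, Odd (Set.ncard {x | x ∈ p.2 ∧ x ∈ Stmt12.orb p.1 a})) ∧
        ∀ m : ℕ, 1 ≤ m → Stmt12.ocount p.1 m = k m} := rfl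
  rw [hset, ← Nat.card_coe_set_eq]
  have hsub : Nat.card {p : Equiv.Perm (ZMod n) × Finset (ZMod n) //
        (∀ a : ZMod n, Odd (Set.ncard {x | x ∈ p.2 ∧ x ∈ Stmt12.orb p.1 a})) ∧
        ∀ m : ℕ, 1 ≤ m → Stmt12.ocount p.1 m = k m}
      = ∑ σ : Equiv.Perm (ZMod n), Nat.card {S : Finset (ZMod n) //
          (∀ a : ZMod n, Odd (Set.ncard {x | x ∈ S ∧ x ∈ Stmt12.orb σ a})) ∧
          ∀ m : ℕ, 1 ≤ m → Stmt12.ocount σ m = k m} := by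
    rw [Nat.card_congr (Equiv.subtypeProdEquivSigmaSubtype
      (fun (σ : Equiv.Perm (ZMod n)) (S : Finset (ZMod n)) =>
        (∀ a : ZMod n, Odd (Set.ncard {x | x ∈ S ∧ x ∈ Stmt12.orb σ a})) ∧
        ∀ m : ℕ, 1 ≤ m → Stmt12.ocount σ m = k m))]
    rw [Nat.card_eq_fintype_card, Fintype.card_sigma]
    exact Finset.sum_congr rfl fun σ _ => (Nat.card_eq_fintype_card).symm
  have hco : Nat.card ↥{p : Equiv.Perm (ZMod n) × Finset (ZMod n) |
        (∀ a : ZMod n, Odd (Set.ncard {x | x ∈ p.2 ∧ x ∈ Stmt12.orb p.1 a})) ∧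
        ∀ m : ℕ, 1 ≤ m → Stmt12.ocount p.1 m = k m}
      = Nat.card {p : Equiv.Perm (ZMod n) × Finset (ZMod n) //
        (∀ a : ZMod n, Odd (Set.ncard {x | x ∈ p.2 ∧ x ∈ Stmt12.orb p.1 a})) ∧
        ∀ m : ℕ, 1 ≤ m → Stmt12.ocount p.1 m = k m} := rfl
  rw [hco, hsub]
  -- Step 2: the inner count
  have hinner : ∀ σ : Equiv.Perm (ZMod n), Nat.card {S : Finset (ZMod n) //
          (∀ a : ZMod n, Odd (Set.ncard {x | x ∈ S ∧ x ∈ Stmt12.orb σ a})) ∧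
          ∀ m : ℕ, 1 ≤ m → Stmt12.ocount σ m = k m}
      = if (∀ m : ℕ, 1 ≤ m → Stmt12.ocount σ m = k m)
          then ∏ m ∈ Finset.range (N + 1), (2 ^ (m - 1)) ^ (k m) else 0 := by
    intro σ
    by_cases h : ∀ m : ℕ, 1 ≤ m → Stmt12.ocount σ m = k m
    · rw [if_pos h]
      rw [Nat.card_congr (Equiv.subtypeEquivRight (fun S => and_iff_left h))]
      rw [Stmt12.card_S' σ]
      exact Stmt12.prod_cls σ hk hk0 h
    · rw [if_neg h, Nat.card_eq_fintype_card, Fintype.card_eq_zero_iff]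
      exact ⟨fun S => h S.2.2⟩
  rw [Finset.sum_congr rfl fun σ _ => hinner σ, Finset.sum_ite, Finset.sum_const,
    Finset.sum_const_zero, add_zero, smul_eq_mul]
  -- Step 3: transfer the permutation count to the model type
  have htrans : (Finset.univ.filter (fun σ : Equiv.Perm (ZMod n) =>
        ∀ m : ℕ, 1 ≤ m → Stmt12.ocount σ m = k m)).card
      = Nat.card {σ : Equiv.Perm (Stmt12.B N k) //
          ∀ m : ℕ, 1 ≤ m → Stmt12.ocount σ m = k m} := by
    rw [← Fintype.card_subtype, ← Nat.card_eq_fintype_card]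
    apply Nat.card_congr
    exact (Equiv.subtypeEquiv e.permCongr (fun σ => by
      constructor
      · intro h m hm
        rw [Stmt12.ocount_permCongr e σ m]
        exact h m hm
      · intro h m hm
        have := h m hm
        rwa [Stmt12.ocount_permCongr e σ m] at this)).symm
  rw [htrans]
  -- Step 4: the set of such permutations is the conjugation orbit of `g`
  have hPg : ∀ m : ℕ, 1 ≤ m → Stmt12.ocount (Stmt12.g N k) m = k m :=
    fun m hm => Stmt12.ocount_g N k hk hm
  have horbset : {σ : Equiv.Perm (Stmt12.B N k) |
        ∀ m : ℕ, 1 ≤ m → Stmt12.ocount σ m = k m}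
      = MulAction.orbit (ConjAct (Equiv.Perm (Stmt12.B N k))) (Stmt12.g N k) := by
    ext σ
    constructor
    · intro h
      have hct : (Stmt12.g N k).cycleType = σ.cycleType :=
        Stmt12.cycleType_eq_of_ocount (fun m hm => by rw [hPg m hm, h m hm])
      obtain ⟨c, hc⟩ := isConj_iff.mp (Equiv.Perm.isConj_of_cycleType_eq hct)
      rw [MulAction.mem_orbit_iff]
      exact ⟨ConjAct.toConjAct c, by rw [ConjAct.smul_def, ConjAct.ofConjAct_toConjAct]; exact hc⟩
    · intro h
      obtain ⟨u, hu⟩ := MulAction.mem_orbit_iff.mp h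
      intro m hm
      rw [← hu, ConjAct.smul_def, Stmt12.conj_eq_permCongr,
        Stmt12.ocount_permCongr (ConjAct.ofConjAct u) (Stmt12.g N k) m]
      exact hPg m hm
  have hcount_orbit : Nat.card {σ : Equiv.Perm (Stmt12.B N k) //
        ∀ m : ℕ, 1 ≤ m → Stmt12.ocount σ m = k m}
      = Nat.card (MulAction.orbit (ConjAct (Equiv.Perm (Stmt12.B N k))) (Stmt12.g N k)) := by
    apply Nat.card_congr
    exact Equiv.subtypeEquivRight (fun σ => by rw [← horbset]; exact Iff.rfl)
  rw [hcount_orbit]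
  -- Step 5: orbit-stabilizer
  haveI hfin1 : Fintype (MulAction.orbit (ConjAct (Equiv.Perm (Stmt12.B N k)))
    (Stmt12.g N k)) := Fintype.ofFinite _
  haveI hfin2 : Fintype (MulAction.stabilizer (ConjAct (Equiv.Perm (Stmt12.B N k)))
    (Stmt12.g N k)) := Fintype.ofFinite _
  have hos := MulAction.card_orbit_mul_card_stabilizer_eq_card_group
    (ConjAct (Equiv.Perm (Stmt12.B N k))) (Stmt12.g N k)
  rw [ConjAct.card, Fintype.card_perm, hcardB] at hos
  -- Step 6: the stabilizer is the set of commuting permutations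
  have hstab : Fintype.card (MulAction.stabilizer (ConjAct (Equiv.Perm (Stmt12.B N k)))
        (Stmt12.g N k))
      = ∏ m ∈ Finset.range (N + 1), Nat.factorial (k m) * m ^ (k m) := by
    rw [← Nat.card_eq_fintype_card, ← Stmt12.prod_reindex N k hk0 hk, ← Stmt12.comm_card N k]
    apply Nat.card_congr
    refine ⟨fun u => ⟨ConjAct.ofConjAct u.1, ?_⟩, fun τ => ⟨ConjAct.toConjAct τ.1, ?_⟩, ?_, ?_⟩
    · have hu := u.2
      rw [MulAction.mem_stabilizer_iff, ConjAct.smul_def] at hu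
      exact (mul_inv_eq_iff_eq_mul.mp hu)
    · rw [MulAction.mem_stabilizer_iff, ConjAct.smul_def, ConjAct.ofConjAct_toConjAct,
        mul_inv_eq_iff_eq_mul]
      exact τ.2
    · intro u
      exact Subtype.ext rfl
    · intro τ
      exact Subtype.ext rfl
  rw [hstab] at hos
  rw [Nat.card_eq_fintype_card, ← hos]
  ring
end

section
/- Let W = (w : {1,...,n} → E, S) be a full word and, for m ≥ 1, let k_m be the number of letters e ∈ E with card(w^{-1}(e)) = m. Then the order of Aut(W) divides m·k_m for every m ≥ 1. -/
theorem card_dvd_of_invariant {A : Type*} [AddCommGroup A] [Fintype A] [DecidableEq A]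
    (H : AddSubgroup A) (T : Finset A) (hT : ∀ h ∈ H, ∀ x ∈ T, x + h ∈ T) :
    Nat.card H ∣ T.card := by
  classical
  letI : Fintype (A ⧸ H) := Fintype.ofFinite _
  rw [Finset.card_eq_sum_card_fiberwise
    (f := fun x => (QuotientAddGroup.mk x : A ⧸ H)) (t := Finset.univ)
    (fun x _ => Finset.mem_univ _)]
  refine Finset.dvd_sum fun q _ => ?_
  by_cases hq : (T.filter fun x => (QuotientAddGroup.mk x : A ⧸ H) = q) = ∅
  · simp [hq]
  · obtain ⟨x₀, hx₀⟩ := Finset.nonempty_iff_ne_empty.mpr hq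
    rw [Finset.mem_filter] at hx₀
    have hcard : (T.filter fun x => (QuotientAddGroup.mk x : A ⧸ H) = q).card
        = Nat.card H := by
      rw [Nat.card_eq_fintype_card, ← Finset.card_univ]
      refine Finset.card_bij' (i := fun (x : A) (hx :
          x ∈ T.filter fun x => (QuotientAddGroup.mk x : A ⧸ H) = q) => (⟨x - x₀, by
          rw [Finset.mem_filter] at hx
          have : (QuotientAddGroup.mk x : A ⧸ H) = QuotientAddGroup.mk x₀ :=
            hx.2.trans hx₀.2.symm
          exact (QuotientAddGroup.eq_iff_sub_mem).mp this⟩ : H))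
        (j := fun (h : H) _ => x₀ + (h : A)) ?_ ?_ ?_ ?_
      · intro x hx; exact Finset.mem_univ _
      · intro h _
        rw [Finset.mem_filter]
        refine ⟨hT _ h.2 _ hx₀.1, ?_⟩
        rw [← hx₀.2]
        rw [QuotientAddGroup.eq_iff_sub_mem]
        simp
      · intro x hx; simp
      · intro h _; simp
    rw [hcard]

/-- for a full word `W = (w : {1,...,n} → E, S)`, the order of `Aut(W)`
(which embeds into `ℤ/nℤ` via `(ψ,m) ↦ m`, so its order is the number of admissible
shifts `m`) divides `m·k_m`, where `k_m` is the number of letters occurring exactly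
`m` times in `w`. -/
theorem stmt15 (n : ℕ) (hn : 1 ≤ n) (E : Type*) (w : Fin n → E)
    (hw : Function.Surjective w) (S : Finset (Fin n)) (m : ℕ) (hm : 1 ≤ m) :
    Set.ncard {c : ZMod n | ∃ ψ : Equiv.Perm E,
        (∀ k, ψ (w k) = w ((finRotate n ^ c.val) k)) ∧
          S.image (finRotate n ^ c.val) = S} ∣
      m * Set.ncard {e : E | Set.ncard {k : Fin n | w k = e} = m} := by
  classical
  obtain ⟨N, rfl⟩ : ∃ N, n = N + 1 := ⟨n - 1, (Nat.succ_pred_eq_of_pos hn).symm⟩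
  haveI : Finite E := Finite.of_surjective w hw
  haveI : Fintype E := Fintype.ofFinite E
  -- pointwise formula for powers of finRotate
  open Fin.CommRing in
  have hpow : ∀ (j : ℕ) (k : Fin (N + 1)),
      (finRotate (N + 1) ^ j) k = k + (j : Fin (N + 1)) := by
    intro j
    induction j with
    | zero => intro k; simp
    | succ j ih =>
      intro k
      rw [pow_succ, Equiv.Perm.mul_apply, ih, finRotate_succ_apply, Nat.cast_add,
        Nat.cast_one, add_assoc]
      ring
  -- the set of admissible shifts, as a set of `Fin (N+1)`
  set G : Set (Fin (N + 1)) := {a | ∃ ψ : Equiv.Perm E,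
      (∀ k, ψ (w k) = w (k + a)) ∧ S.image (fun k => k + a) = S} with hG
  open Fin.CommRing in
  have hval : ∀ c : ZMod (N + 1), ((ZMod.val c : ℕ) : Fin (N + 1)) = c := by
    intro c
    exact Fin.cast_val_eq_self c
  have hset : {c : ZMod (N + 1) | ∃ ψ : Equiv.Perm E,
        (∀ k, ψ (w k) = w ((finRotate (N + 1) ^ c.val) k)) ∧
          S.image (finRotate (N + 1) ^ c.val) = S} = G := by
    ext c
    have hlt : ZMod.val c < N + 1 := ZMod.val_lt c
    set a : Fin (N + 1) := ⟨ZMod.val c, hlt⟩ with ha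
    have hfun : ⇑(finRotate (N + 1) ^ ZMod.val c) = fun k => k + a := by
      funext k
      rw [hpow]
      congr 1
      exact (Fin.cast_val_eq_self a).symm ▸ rfl
    show _ ↔ a ∈ G
    simp only [hG, Set.mem_setOf_eq, hfun]
  rw [hset]
  -- G is a subgroup
  have hzero : (0 : Fin (N + 1)) ∈ G := by
    refine ⟨1, fun k => by simp, ?_⟩
    simp
  have hadd : ∀ a ∈ G, ∀ b ∈ G, a + b ∈ G := by
    rintro a ⟨ψa, ha1, ha2⟩ b ⟨ψb, hb1, hb2⟩
    refine ⟨ψb * ψa, fun k => ?_, ?_⟩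
    · rw [Equiv.Perm.mul_apply, ha1, hb1, add_assoc]
    · have : S.image (fun k => k + (a + b))
          = (S.image (fun k => k + a)).image (fun k => k + b) := by
        rw [Finset.image_image]
        apply Finset.image_congr
        intro x _
        simp [add_assoc]
      rw [this, ha2, hb2]
  have hneg : ∀ a ∈ G, -a ∈ G := by
    rintro a ⟨ψ, h1, h2⟩
    refine ⟨ψ⁻¹, fun k => ?_, ?_⟩
    · have := h1 (k + -a)
      rw [add_assoc, neg_add_cancel, add_zero] at this
      rw [← this, Equiv.Perm.inv_def, Equiv.symm_apply_apply]
    · have : S.image (fun k => k + -a)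
          = (S.image (fun k => k + a)).image (fun k => k + -a) := by
        rw [h2]
      rw [this, Finset.image_image]
      have : ((fun k => k + -a) ∘ fun k : Fin (N + 1) => k + a) = id := by
        funext x
        simp [add_assoc]
      rw [this, Finset.image_id]
  set H : AddSubgroup (Fin (N + 1)) :=
    { carrier := G
      add_mem' := fun ha hb => hadd _ ha _ hb
      zero_mem' := hzero
      neg_mem' := fun ha => hneg _ ha } with hH
  -- the index set T
  set T : Finset (Fin (N + 1)) :=
    Finset.univ.filter (fun k => Set.ncard {j : Fin (N + 1) | w j = w k} = m) with hTdef
  -- T is invariant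
  have hinv : ∀ h ∈ H, ∀ x ∈ T, x + h ∈ T := by
    intro a ha x hx
    obtain ⟨ψ, h1, _⟩ := ha
    rw [hTdef, Finset.mem_filter] at hx ⊢
    refine ⟨Finset.mem_univ _, ?_⟩
    have himg : (fun j : Fin (N + 1) => j + a) '' {j | w j = w x}
        = {j | w j = w (x + a)} := by
      ext j
      simp only [Set.mem_image, Set.mem_setOf_eq]
      constructor
      · rintro ⟨y, hy, rfl⟩
        rw [← h1, hy, h1]
      · intro hj
        refine ⟨j - a, ?_, by simp⟩
        have : ψ (w (j - a)) = ψ (w x) := by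
          rw [h1, h1, sub_add_cancel, hj]
        exact ψ.injective this
    rw [← himg, Set.ncard_image_of_injective _ (add_left_injective a)]
    exact hx.2
  -- counting T
  set Em : Finset E :=
    Finset.univ.filter (fun e => Set.ncard {k : Fin (N + 1) | w k = e} = m) with hEm
  have hfibcard : ∀ e : E, Set.ncard {k : Fin (N + 1) | w k = e}
      = (Finset.univ.filter (fun k => w k = e)).card := by
    intro e
    rw [← Set.ncard_coe_finset]
    congr 1
    ext k
    simp
  have hTcard : T.card = m * Em.card := by
    have hT : T = Em.biUnion (fun e => Finset.univ.filter (fun k => w k = e)) := by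
      ext k
      simp only [hTdef, hEm, Finset.mem_filter, Finset.mem_biUnion, Finset.mem_univ,
        true_and]
      constructor
      · intro hk
        exact ⟨w k, hk, rfl⟩
      · rintro ⟨e, he, rfl⟩
        exact he
    rw [hT, Finset.card_biUnion]
    · rw [Finset.sum_congr rfl (fun e he => ?_), Finset.sum_const, smul_eq_mul, mul_comm]
      rw [hEm, Finset.mem_filter] at he
      rw [← hfibcard]
      exact he.2
    · intro e₁ _ e₂ _ hne
      rw [Function.onFun, Finset.disjoint_left]
      intro k h1 h2
      rw [Finset.mem_filter] at h1 h2
      exact hne (h1.2.symm.trans h2.2)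
  -- conclude
  have hdvd := card_dvd_of_invariant H T hinv
  rw [hTcard] at hdvd
  have hE : Set.ncard {e : E | Set.ncard {k : Fin (N + 1) | w k = e} = m} = Em.card := by
    rw [← Set.ncard_coe_finset]
    congr 1
    ext e
    simp [hEm]
  rw [hE]
  have hGcard : Set.ncard G = Nat.card H := by
    rw [← Nat.card_coe_set_eq]
    rfl
  change Set.ncard G ∣ _
  rw [hGcard]
  exact hdvd
end

section
/- Let W = (w : {1,...,n} → E, S) be an odd full word. Define v : {1,...,n} → {1,...,n} by: v(k) is the minimal element of {k+1,...,n} that is w-equivalent to k, or, if none exists, the minimal element of {1,...,k} w-equivalent to k. Then v is a bijection whose orbits are exactly the w-equivalence classes, and (n, v, S) is a coherent semichart; moreover it is the unique coherent semichart whose associated word equals W. -/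
/-- for an odd full word `W = (w : {1,...,n} → E, S)` (indices `Fin n` with
their order), the map `v` sending `k` to the least `l > k` that is `w`-equivalent to `k`
(or, if none, the least element of the `w`-class of `k`) is a bijection whose orbits are
the `w`-equivalence classes; `(n, v, S)` is a coherent semichart, and it is the unique
coherent semichart whose associated word is `W`. -/
theorem stmt17 (n : ℕ) (hn : 1 ≤ n) (E : Type*) (w : Fin n → E)
    (hw : Function.Surjective w) (S : Finset (Fin n))
    (hodd : ∀ e : E, Odd (Set.ncard {l : Fin n | l ∈ S ∧ w l = e}))
    (v : Fin n → Fin n)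
    (hv1 : ∀ k : Fin n, (∃ l, k < l ∧ w l = w k) →
        k < v k ∧ w (v k) = w k ∧ ∀ l, k < l → w l = w k → v k ≤ l)
    (hv2 : ∀ k : Fin n, (¬ ∃ l, k < l ∧ w l = w k) →
        w (v k) = w k ∧ ∀ l, w l = w k → v k ≤ l) :
    Function.Bijective v ∧
    (∀ k l : Fin n, (∃ s : ℕ, v^[s] k = l) ↔ w k = w l) ∧
    (∀ k : Fin n, Odd (Set.ncard {l : Fin n | l ∈ S ∧ w l = w k})) ∧
    (∀ k : Fin n, k < v k ∨
        ((∀ l, w l = w k → l ≤ k) ∧ (∀ l, w l = w k → v k ≤ l))) ∧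
    (∀ v' : Fin n → Fin n, Function.Bijective v' →
        (∀ k l : Fin n, (∃ s : ℕ, v'^[s] k = l) ↔ w k = w l) →
        (∀ k : Fin n, k < v' k ∨
          ((∀ l, w l = w k → l ≤ k) ∧ (∀ l, w l = w k → v' k ≤ l))) →
        v' = v) := by
  classical
  -- `v` preserves the class
  have hvw : ∀ k, w (v k) = w k := by
    intro k
    by_cases h : ∃ l, k < l ∧ w l = w k
    · exact (hv1 k h).2.1
    · exact (hv2 k h).1
  -- injectivity
  have hinj : Function.Injective v := by
    intro a b hab
    by_contra hne
    have hwab : w a = w b := by rw [← hvw a, ← hvw b, hab]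
    -- wlog a < b
    rcases lt_or_gt_of_ne hne with h | h
    · have h1 := hv1 a ⟨b, h, hwab.symm⟩
      have hva : v a ≤ b := h1.2.2 b h hwab.symm
      by_cases hb : ∃ l, b < l ∧ w l = w b
      · have := (hv1 b hb).1
        rw [← hab] at this
        exact absurd (lt_of_le_of_lt hva this) (lt_irrefl _)
      · have := (hv2 b hb).2 a hwab
        rw [← hab] at this
        exact absurd (lt_of_le_of_lt this h1.1) (lt_irrefl _)
    · have h1 := hv1 b ⟨a, h, hwab⟩
      have hvb : v b ≤ a := h1.2.2 a h hwab
      by_cases ha : ∃ l, a < l ∧ w l = w a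
      · have := (hv1 a ha).1
        rw [hab] at this
        exact absurd (lt_of_le_of_lt hvb this) (lt_irrefl _)
      · have := (hv2 a ha).2 b hwab.symm
        rw [hab] at this
        exact absurd (lt_of_le_of_lt this h1.1) (lt_irrefl _)
  have hbij : Function.Bijective v := Finite.injective_iff_bijective.mp hinj
  -- iterates preserve class
  have hiterw : ∀ (s : ℕ) (k : Fin n), w (v^[s] k) = w k := by
    intro s
    induction s with
    | zero => intro k; rfl
    | succ s ih =>
      intro k
      rw [Function.iterate_succ_apply', hvw, ih]
  -- per-point periodicity
  have hper : ∀ k : Fin n, ∃ p : ℕ, 0 < p ∧ v^[p] k = k := by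
    intro k
    obtain ⟨a, b, hne, heq'⟩ := Finite.exists_ne_map_eq_of_infinite (fun s : ℕ => v^[s] k)
    have heq : v^[a] k = v^[b] k := heq'
    rcases lt_or_gt_of_ne hne with h | h
    · refine ⟨b - a, by omega, ?_⟩
      have : v^[a] (v^[b - a] k) = v^[a] k := by
        rw [← Function.iterate_add_apply]
        rw [show a + (b - a) = b by omega, heq]
      exact (hinj.iterate a) this
    · refine ⟨a - b, by omega, ?_⟩
      have : v^[b] (v^[a - b] k) = v^[b] k := by
        rw [← Function.iterate_add_apply]
        rw [show b + (a - b) = a by omega, ← heq]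
      exact (hinj.iterate b) this
  -- reach from below within a class
  have hreach : ∀ (L : ℕ) (l : Fin n), l.val = L → ∀ k : Fin n, w k = w l → k ≤ l →
      ∃ s : ℕ, v^[s] k = l := by
    intro L
    induction L using Nat.strong_induction_on with
    | _ L ih =>
      intro l hl k hwk hkl
      rcases eq_or_lt_of_le hkl with heq | hlt
      · exact ⟨0, Fin.ext (by exact_mod_cast congrArg Fin.val heq)⟩
      · -- k < l; take p the largest class element < l
        set T : Finset (Fin n) := Finset.univ.filter (fun j => w j = w l ∧ j < l) with hT
        have hkT : k ∈ T := by simp [hT, hwk, hlt]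
        have hTne : T.Nonempty := ⟨k, hkT⟩
        set p := T.max' hTne with hp
        have hpT : p ∈ T := T.max'_mem hTne
        have hpw : w p = w l := by simp [hT] at hpT; exact hpT.1
        have hpl : p < l := by simp [hT] at hpT; exact hpT.2
        have hkp : k ≤ p := T.le_max' k hkT
        -- v p = l
        have h1 := hv1 p ⟨l, hpl, hpw.symm⟩
        have hvpl : v p ≤ l := h1.2.2 l hpl hpw.symm
        have hvp : v p = l := by
          rcases eq_or_lt_of_le hvpl with h | h
          · exact h
          · exfalso
            have : v p ∈ T := by
              simp only [hT, Finset.mem_filter, Finset.mem_univ, true_and]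
              exact ⟨by rw [h1.2.1, hpw], h⟩
            exact absurd (lt_of_le_of_lt (T.le_max' _ this) h1.1) (lt_irrefl _)
        obtain ⟨s, hs⟩ := ih p.val (by omega) p rfl k (by rw [hwk, ← hpw]) hkp
        exact ⟨s + 1, by rw [Function.iterate_succ_apply', hs, hvp]⟩
  -- orbits = classes
  have horb : ∀ k l : Fin n, (∃ s : ℕ, v^[s] k = l) ↔ w k = w l := by
    intro k l
    constructor
    · rintro ⟨s, rfl⟩
      exact (hiterw s k).symm
    · intro hwk
      -- min of class
      set C : Finset (Fin n) := Finset.univ.filter (fun j => w j = w k) with hC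
      have hkC : k ∈ C := by simp [hC]
      have hlC : l ∈ C := by simp [hC, hwk]
      have hCne : C.Nonempty := ⟨k, hkC⟩
      set m := C.min' hCne with hm
      have hmC : m ∈ C := C.min'_mem hCne
      have hmw : w m = w k := by simp [hC] at hmC; exact hmC
      obtain ⟨s, hs⟩ := hreach k.val k rfl m hmw (C.min'_le k hkC)
      obtain ⟨t, ht⟩ := hreach l.val l rfl m (by rw [hmw, hwk]) (C.min'_le l hlC)
      obtain ⟨p, hp0, hpfix⟩ := hper m
      refine ⟨t + (p * s - s), ?_⟩
      have hback : v^[p * s - s] k = m := by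
        rw [← hs, ← Function.iterate_add_apply,
          show p * s - s + s = p * s by
            have : s ≤ p * s := Nat.le_mul_of_pos_left s hp0
            omega,
          Function.iterate_mul]
        exact Function.iterate_fixed hpfix s
      rw [Function.iterate_add_apply, hback, ht]
  -- coherence
  have hcoh : ∀ k : Fin n, k < v k ∨
      ((∀ l, w l = w k → l ≤ k) ∧ (∀ l, w l = w k → v k ≤ l)) := by
    intro k
    by_cases h : ∃ l, k < l ∧ w l = w k
    · exact Or.inl (hv1 k h).1
    · right
      refine ⟨fun l hl => ?_, (hv2 k h).2⟩
      by_contra hc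
      exact h ⟨l, lt_of_not_ge hc, hl⟩
  refine ⟨hbij, horb, fun k => hodd (w k), hcoh, ?_⟩
  -- uniqueness
  intro v' hbij' horb' hcoh'
  have hvw' : ∀ k, w (v' k) = w k := by
    intro k
    exact ((horb' k (v' k)).mp ⟨1, rfl⟩).symm
  have key : ∀ d : ℕ, ∀ k : Fin n, n - k.val ≤ d → v' k = v k := by
    intro d
    induction d with
    | zero => intro k hk; exact absurd hk (by have := k.isLt; omega)
    | succ d ih =>
      intro k hk
      have IH : ∀ j : Fin n, k < j → v' j = v j := by
        intro j hj
        have h1 : k.val < j.val := hj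
        have h2 := j.isLt
        exact ih j (by omega)
      by_cases h : ∃ l, k < l ∧ w l = w k
      · -- k < v k and v k is the least class element above k
        have h1 := hv1 k h
        have hk' : k < v' k := by
          rcases hcoh' k with hc | hc
          · exact hc
          · obtain ⟨l, hl1, hl2⟩ := h
            exact absurd (hc.1 l hl2) (not_le_of_gt hl1)
        have hle : v k ≤ v' k := h1.2.2 (v' k) hk' (hvw' k)
        rcases eq_or_lt_of_le hle with heq | hlt
        · exact heq.symm
        · exfalso
          -- q: the largest class element < v' k
          set T : Finset (Fin n) := Finset.univ.filter (fun j => w j = w k ∧ j < v' k)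
            with hT
          have hvkT : v k ∈ T := by simp [hT, h1.2.1, hlt]
          have hTne : T.Nonempty := ⟨v k, hvkT⟩
          set q := T.max' hTne with hq
          have hqT : q ∈ T := T.max'_mem hTne
          have hqw : w q = w k := by simp [hT] at hqT; exact hqT.1
          have hqlt : q < v' k := by simp [hT] at hqT; exact hqT.2
          have hkq : k < q := lt_of_lt_of_le h1.1 (T.le_max' _ hvkT)
          -- v q = v' k
          have h2 := hv1 q ⟨v' k, hqlt, by rw [hvw' k, ← hqw]⟩
          have hvq : v q = v' k := by
            rcases eq_or_lt_of_le (h2.2.2 (v' k) hqlt (by rw [hvw' k, ← hqw]))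
              with hh | hh
            · exact hh
            · exfalso
              have : v q ∈ T := by
                simp only [hT, Finset.mem_filter, Finset.mem_univ, true_and]
                exact ⟨by rw [h2.2.1, hqw], hh⟩
              exact absurd (lt_of_le_of_lt (T.le_max' _ this) h2.1) (lt_irrefl _)
          have : v' q = v' k := by rw [IH q hkq, hvq]
          exact absurd (hbij'.1 this) (ne_of_gt hkq)
      · -- both v k and v' k are the min of the class
        have h2 := hv2 k h
        have hc' : (∀ l, w l = w k → l ≤ k) ∧ (∀ l, w l = w k → v' k ≤ l) := by
          rcases hcoh' k with hc | hc
          · exact absurd ⟨v' k, hc, hvw' k⟩ h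
          · exact hc
        exact le_antisymm (hc'.2 (v k) (hvw k)) (h2.2 (v' k) (hvw' k))
  funext k
  exact key n k (by omega)
end

section
/- Let (n, v, S) be a coherent semichart and let W = (w, S) be its associated word. If m ∈ ℤ/nℤ is such that the m-th power of the circular permutation σ of {1,...,n} satisfies: σ^m maps w-equivalence classes to w-equivalence classes and σ^m(S) = S, then σ^m commutes with v. Consequently every automorphism of W arises from an automorphism of the semichart, i.e., Aut(v,S) = Aut(W). -/
namespace Stmt18Aux

open Fin.CommRing

variable {n : ℕ}

/-- Same v-orbit. -/
def SO (v : Equiv.Perm (Fin n)) (k l : Fin n) : Prop := ∃ s : ℕ, (v ^ s) k = l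

lemma SO.rfl {v : Equiv.Perm (Fin n)} {k : Fin n} : SO v k k := ⟨0, by simp⟩

lemma SO.step {v : Equiv.Perm (Fin n)} (k : Fin n) : SO v k (v k) := ⟨1, by simp⟩

lemma SO.trans {v : Equiv.Perm (Fin n)} {k l m : Fin n} (h1 : SO v k l) (h2 : SO v l m) :
    SO v k m := by
  obtain ⟨s, rfl⟩ := h1; obtain ⟨t, rfl⟩ := h2
  exact ⟨t + s, by rw [pow_add]; simp⟩

lemma SO.symm {v : Equiv.Perm (Fin n)} {k l : Fin n} (h : SO v k l) : SO v l k := by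
  obtain ⟨s, rfl⟩ := h
  refine ⟨s * (orderOf v - 1), ?_⟩
  have h1 : 1 ≤ orderOf v := orderOf_pos v
  have hsum : s * (orderOf v - 1) + s = s * orderOf v := by
    obtain ⟨N, hN⟩ : ∃ N, orderOf v = N + 1 := ⟨orderOf v - 1, by omega⟩
    rw [hN, Nat.add_sub_cancel]; ring
  have : (v ^ (s * (orderOf v - 1))) ((v ^ s) k) = (v ^ (s * orderOf v)) k := by
    rw [← Equiv.Perm.mul_apply, ← pow_add, hsum]
  rw [this, pow_mul', pow_orderOf_eq_one, one_pow]
  rfl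

lemma SO.fixed {v : Equiv.Perm (Fin n)} {k : Fin n} (h : v k = k) {l : Fin n}
    (hl : SO v k l) : l = k := by
  obtain ⟨s, rfl⟩ := hl
  induction s with
  | zero => rfl
  | succ s ih => rw [pow_succ, Equiv.Perm.mul_apply, h, ih]

/-- Coherence hypothesis abbreviation. -/
def Coh (v : Equiv.Perm (Fin n)) : Prop :=
  ∀ k : Fin n, k < v k ∨
      ((∀ l, (∃ s : ℕ, (v ^ s) k = l) → l ≤ k) ∧
       (∀ l, (∃ s : ℕ, (v ^ s) k = l) → v k ≤ l))

lemma noBetween {v : Equiv.Perm (Fin n)} (hcoh : Coh v) :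
    ∀ N : ℕ, ∀ l k : Fin n, l.val < N → SO v k l → k < l → l < v k → False := by
  intro N
  induction N with
  | zero => intro l k h; omega
  | succ N ih =>
    intro l k hlN hso hkl hlv
    set y := v⁻¹ l with hy
    have hvy : v y = l := v.apply_symm_apply l
    have hsoyl : SO v y l := hvy ▸ SO.step y
    have hsoky : SO v k y := hso.trans hsoyl.symm
    rcases hcoh y with h1 | h2
    · have hyl : y < l := hvy ▸ h1
      have hyk : y ≠ k := by
        intro h; rw [h] at hvy; rw [hvy] at hlv; exact absurd hlv (lt_irrefl l)
      rcases lt_or_gt_of_ne hyk with hlt | hgt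
      · -- y < k ; pair (y, k) with second coordinate k, k.val < N
        have hk : k.val < l.val := hkl
        exact ih k y (by omega) hsoky.symm hlt (hvy ▸ hkl)
      · -- k < y ; pair (k, y)
        have h5 : y.val < l.val := hyl
        exact ih y k (by omega) hsoky hgt (lt_trans hyl hlv)
    · have := h2.2 k hsoky.symm
      rw [hvy] at this
      exact absurd hkl (not_lt.mpr this)

lemma sub_val_lt {a b : Fin n} (h : a < b) : (b - a).val = b.val - a.val := by
  rw [Fin.sub_def]
  have ha := a.isLt
  have hb := b.isLt
  have h' : a.val < b.val := h
  show (n - a.val + b.val) % n = b.val - a.val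
  have heq : n - a.val + b.val = (b.val - a.val) + n := by omega
  rw [heq, Nat.add_mod_right, Nat.mod_eq_of_lt (by omega)]

lemma sub_val_gt {a b : Fin n} (h : b < a) : (b - a).val = n + b.val - a.val := by
  rw [Fin.sub_def]
  have ha := a.isLt
  have hb := b.isLt
  have h' : b.val < a.val := h
  show (n - a.val + b.val) % n = n + b.val - a.val
  rw [Nat.mod_eq_of_lt (by omega)]
  omega

/-- v k is the cyclic successor: the cyclic gap from k to v k is minimal. -/
lemma min_gap {v : Equiv.Perm (Fin n)} (hcoh : Coh v) (k x : Fin n) (hso : SO v k x)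
    (hx : x ≠ k) (hxv : x ≠ v k) : (v k - k).val < (x - k).val := by
  have hvk_ne : v k ≠ k := by
    intro h
    exact hx (hso.fixed h)
  rcases hcoh k with h1 | h2
  · -- k < v k
    have hnb : ¬ (k < x ∧ x < v k) := by
      rintro ⟨ha, hb⟩
      exact noBetween hcoh n x k x.isLt hso ha hb
    rcases lt_or_gt_of_ne hx with hlt | hgt
    · -- x < k
      rw [sub_val_lt h1, sub_val_gt hlt]
      have := (v k).isLt
      have h1' : k.val < (v k).val := h1
      have hlt' : x.val < k.val := hlt
      omega
    · -- k < x, so v k < x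
      have hvx : v k < x := by
        rcases lt_trichotomy x (v k) with h | h | h
        · exact absurd ⟨hgt, h⟩ hnb
        · exact absurd h hxv
        · exact h
      rw [sub_val_lt h1, sub_val_lt hgt]
      have h1' : k.val < (v k).val := h1
      have hvx' : (v k).val < x.val := hvx
      omega
  · -- k is max, v k is min
    have hxk : x ≤ k := h2.1 x hso
    have hvx : v k ≤ x := h2.2 x hso
    have hvkk : v k < k := lt_of_le_of_ne (h2.1 (v k) (SO.step k)) hvk_ne
    have hx' : x < k := lt_of_le_of_ne hxk hx
    have hv' : v k < x := lt_of_le_of_ne hvx (Ne.symm hxv)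
    rw [sub_val_gt hvkk, sub_val_gt hx']
    have := k.isLt
    have a1 : (v k).val < x.val := hv'
    have a2 : x.val < k.val := hx'
    omega

lemma rotpow [NeZero n] (m : ℕ) (k : Fin n) :
    ((finRotate n) ^ m) k = k + (m : Fin n) := by
  obtain ⟨n', rfl⟩ : ∃ n', n = n' + 1 :=
    ⟨n - 1, (Nat.succ_pred_eq_of_pos (NeZero.pos n)).symm⟩
  induction m with
  | zero => simp
  | succ m ih =>
    rw [pow_succ', Equiv.Perm.mul_apply, ih, finRotate_succ_apply]
    push_cast
    ring

lemma commute_key (hn : 1 ≤ n) {v : Equiv.Perm (Fin n)} (hcoh : Coh v) (c : Fin n)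
    (H : ∀ k l, SO v k l → SO v (k + c) (l + c)) : ∀ k, v (k + c) = v k + c := by
  haveI : NeZero n := ⟨by omega⟩
  have Hj : ∀ j : ℕ, ∀ k l, SO v k l → SO v (k + j • c) (l + j • c) := by
    intro j
    induction j with
    | zero => simpa using fun k l h => h
    | succ j ih =>
      intro k l h
      have := H _ _ (ih k l h)
      rwa [add_assoc, add_assoc, ← succ_nsmul] at this
  have hnc : n • c = 0 := by
    rw [nsmul_eq_mul, Fin.natCast_self, zero_mul]
  have H' : ∀ k l, SO v (k + c) (l + c) → SO v k l := by
    intro k l h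
    have h2 := Hj (n - 1) _ _ h
    have he : ∀ a : Fin n, a + c + (n - 1) • c = a := by
      intro a
      rw [add_assoc, ← succ_nsmul']
      have h3 : n - 1 + 1 = n := by omega
      rw [h3, hnc, add_zero]
    rwa [he, he] at h2
  intro k
  by_cases hvk : v k = k
  · -- trivial orbit
    have htriv : ∀ y, SO v (k + c) y → y = k + c := by
      intro y hy
      have h2 : SO v (k + c) ((y - c) + c) := by rwa [sub_add_cancel]
      have h3 : y - c = k := (H' _ _ h2).fixed hvk
      rw [← sub_add_cancel y c, h3]
    have h4 := htriv (v (k + c)) (SO.step _)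
    rw [h4, hvk]
  · have h1 : SO v (k + c) (v k + c) := H _ _ (SO.step k)
    have h2 : SO v k (v (k + c) - c) := by
      have hx : SO v (k + c) ((v (k + c) - c) + c) := by
        rw [sub_add_cancel]; exact SO.step _
      exact H' _ _ hx
    have hne : v (k + c) ≠ k + c := by
      intro h
      exact hvk (add_right_cancel (h1.fixed h))
    by_cases e1 : v k + c = v (k + c)
    · exact e1.symm
    have e2 : v (k + c) - c ≠ v k := by
      intro h
      apply e1
      rw [← h, sub_add_cancel]
    have g1 := min_gap hcoh (k + c) (v k + c) h1
      (fun h => hvk (add_right_cancel h)) e1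
    have g2 := min_gap hcoh k (v (k + c) - c) h2
      (fun h => hne (by rw [← sub_add_cancel (v (k + c)) c, h]))
      e2
    have r1 : v k + c - (k + c) = v k - k := by ring
    have r2 : v (k + c) - c - k = v (k + c) - (k + c) := by ring
    rw [r1] at g1
    rw [r2] at g2
    omega

end Stmt18Aux

open Stmt18Aux
open Fin.CommRing

/-- let `(n,v,S)` be a coherent semichart (indices `Fin n` with their
order, circular permutation `ρ = finRotate n`).  If `ρ^m` maps `v`-orbits to `v`-orbits
and `ρ^m(S) = S`, then `ρ^m` commutes with `v`; consequently the automorphisms of the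
semichart coincide with the automorphisms of the associated word,
i.e. `Aut(v,S) = Aut(W)`. -/
theorem stmt18 (n : ℕ) (hn : 1 ≤ n) (v : Equiv.Perm (Fin n)) (S : Finset (Fin n))
    (hsemi : ∀ a : Fin n, Odd (Set.ncard {x : Fin n | x ∈ S ∧ ∃ s : ℕ, (v ^ s) a = x}))
    (hcoh : ∀ k : Fin n, k < v k ∨
        ((∀ l, (∃ s : ℕ, (v ^ s) k = l) → l ≤ k) ∧
         (∀ l, (∃ s : ℕ, (v ^ s) k = l) → v k ≤ l))) :
    (∀ m : ℕ,
        (∀ k l : Fin n, (∃ s : ℕ, (v ^ s) k = l) →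
          ∃ s : ℕ, (v ^ s) ((finRotate n ^ m) k) = (finRotate n ^ m) l) →
        S.image (finRotate n ^ m) = S →
        ∀ k, (finRotate n ^ m) (v k) = v ((finRotate n ^ m) k)) ∧
    ({m : ℕ | (∀ k l : Fin n, (∃ s : ℕ, (v ^ s) k = l) →
          ∃ s : ℕ, (v ^ s) ((finRotate n ^ m) k) = (finRotate n ^ m) l) ∧
        S.image (finRotate n ^ m) = S} =
      {m : ℕ | (∀ k, (finRotate n ^ m) (v k) = v ((finRotate n ^ m) k)) ∧
        S.image (finRotate n ^ m) = S}) := by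
  haveI : NeZero n := ⟨by omega⟩
  have main : ∀ m : ℕ,
      (∀ k l : Fin n, (∃ s : ℕ, (v ^ s) k = l) →
        ∃ s : ℕ, (v ^ s) ((finRotate n ^ m) k) = (finRotate n ^ m) l) →
      ∀ k, (finRotate n ^ m) (v k) = v ((finRotate n ^ m) k) := by
    intro m Horb k
    have H : ∀ k l, SO v k l → SO v (k + (m : Fin n)) (l + (m : Fin n)) := by
      intro k l h
      have h2 := Horb k l h
      simp only [rotpow] at h2
      exact h2
    have hc := commute_key hn hcoh (m : Fin n) H k
    rw [rotpow, rotpow]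
    exact hc.symm
  refine ⟨fun m h _ => main m h, ?_⟩
  ext m
  simp only [Set.mem_setOf_eq]
  constructor
  · rintro ⟨h1, h2⟩
    exact ⟨main m h1, h2⟩
  · rintro ⟨h1, h2⟩
    refine ⟨?_, h2⟩
    rintro k l ⟨s, rfl⟩
    refine ⟨s, ?_⟩
    induction s with
    | zero => simp
    | succ s ih =>
      rw [pow_succ', Equiv.Perm.mul_apply, Equiv.Perm.mul_apply, ih, h1]
end
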